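/- arXiv:1306.4350 — 7 statements merged into one kernel-verified Lean document; each statement's English description precedes it below -/
import Mathlib

section
/- Let A_1 and A_2 be complex 2×2 matrices with det A_1 = det A_2 = 1, and let r > 0. Then there exist 2×2 complex unitary matrices U_1, U_2, V such that both U_1† A_1 V and U_2† A_2 V are upper-triangular with diagonal entries r and 1/r (in this order), if and only if the following three conditions hold: det(A_1†A_1 − r²I) ≤ 0, det(A_2†A_2 − r²I) ≤ 0, and F_1(A_1†A_1 − r²I, A_2†A_2 − r²I) ≥ 0. -/
open Matrix ComplexOrder

/-- `F₁(S₁, S₂) = det (S₁ · adj(S₂) − S₂ · adj(S₁))`. -/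
noncomputable def F1 {n : ℕ} (S₁ S₂ : Matrix (Fin n) (Fin n) ℂ) : ℂ :=
  (S₁ * S₂.adjugate - S₂ * S₁.adjugate).det

noncomputable def QF (S : Matrix (Fin 2) (Fin 2) ℂ) (v : Fin 2 → ℂ) : ℂ :=
  star v ⬝ᵥ S.mulVec v

lemma QF_eq (S : Matrix (Fin 2) (Fin 2) ℂ) (v : Fin 2 → ℂ) :
    QF S v = (starRingEnd ℂ) (v 0) * S 0 0 * v 0 + (starRingEnd ℂ) (v 0) * S 0 1 * v 1
      + (starRingEnd ℂ) (v 1) * S 1 0 * v 0 + (starRingEnd ℂ) (v 1) * S 1 1 * v 1 := by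
  simp [QF, dotProduct, Matrix.mulVec, Fin.sum_univ_two, Complex.star_def]
  ring

/-- completion of a column to a matrix; unitary when the column is a unit vector. -/
noncomputable def Wmat (x y : ℂ) : Matrix (Fin 2) (Fin 2) ℂ :=
  !![x, -(starRingEnd ℂ) y; y, (starRingEnd ℂ) x]

lemma Wmat_adjugate (x y : ℂ) : (Wmat x y).adjugate = (Wmat x y)ᴴ := by
  simp [Wmat, Matrix.adjugate_fin_two]
  ext i j
  fin_cases i <;> fin_cases j <;> simp [Matrix.conjTranspose_apply]

lemma Wmat_det (x y : ℂ) : (Wmat x y).det = x * (starRingEnd ℂ) x + y * (starRingEnd ℂ) y := by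
  simp [Wmat, Matrix.det_fin_two]; ring

section congrW

variable (W S S₁ S₂ : Matrix (Fin 2) (Fin 2) ℂ)

lemma adjW_conjT (h1 : W.adjugate = Wᴴ) : (Wᴴ).adjugate = W := by
  rw [← Matrix.adjugate_conjTranspose, h1, Matrix.conjTranspose_conjTranspose]

lemma F1_conj (h1 : W.adjugate = Wᴴ) (h2 : W.det = 1) :
    F1 (Wᴴ * S₁ * W) (Wᴴ * S₂ * W) = F1 S₁ S₂ := by
  have hWWH : W * Wᴴ = 1 := by rw [← h1, Matrix.mul_adjugate, h2, one_smul]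
  have hdetH : (Wᴴ).det = 1 := by
    rw [Matrix.det_conjTranspose, h2]; simp
  have key : ∀ T₁ T₂ : Matrix (Fin 2) (Fin 2) ℂ,
      (Wᴴ * T₁ * W) * (Wᴴ * T₂ * W).adjugate = Wᴴ * (T₁ * T₂.adjugate) * W := by
    intro T₁ T₂
    rw [Matrix.adjugate_mul_distrib, Matrix.adjugate_mul_distrib, h1, adjW_conjT W h1]
    simp only [Matrix.mul_assoc]
    rw [← Matrix.mul_assoc W Wᴴ, hWWH, Matrix.one_mul]
  unfold F1
  rw [key, key]
  have hsub : Wᴴ * (S₁ * S₂.adjugate) * W - Wᴴ * (S₂ * S₁.adjugate) * W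
      = Wᴴ * (S₁ * S₂.adjugate - S₂ * S₁.adjugate) * W := by
    rw [Matrix.mul_sub, Matrix.sub_mul]
  rw [hsub, Matrix.det_mul, Matrix.det_mul, hdetH, h2]
  ring

lemma det_conj (h2 : W.det = 1) : (Wᴴ * S * W).det = S.det := by
  rw [Matrix.det_mul, Matrix.det_mul, Matrix.det_conjTranspose, h2]
  simp

lemma herm_conj (h : Sᴴ = S) : (Wᴴ * S * W)ᴴ = Wᴴ * S * W := by
  simp [Matrix.conjTranspose_mul, h, mul_assoc]

lemma QF_conj (v : Fin 2 → ℂ) : QF (Wᴴ * S * W) v = QF S (W.mulVec v) := by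
  rw [QF_eq, QF_eq]
  simp [Matrix.mul_apply, Matrix.mulVec, dotProduct, Fin.sum_univ_two,
    Matrix.conjTranspose_apply, Complex.star_def, map_add, _root_.map_mul]
  ring

lemma entry00 : (Wᴴ * S * W) 0 0 = QF S (fun i => W i 0) := by
  rw [QF_eq]
  simp [Matrix.mul_apply, Fin.sum_univ_two, Matrix.conjTranspose_apply]
  ring

end congrW

lemma F1_explicit (a₁ b₁ c₁ d₁ a₂ b₂ c₂ d₂ : ℂ) :
    F1 !![a₁, b₁; c₁, d₁] !![a₂, b₂; c₂, d₂]
      = -(a₁*d₂ - b₁*c₂ - a₂*d₁ + b₂*c₁)^2 - 4*(a₂*b₁ - a₁*b₂)*(c₁*d₂ - c₂*d₁) := by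
  simp [F1, Matrix.adjugate_fin_two, Matrix.det_fin_two, Matrix.mul_apply, Fin.sum_univ_two]
  ring

lemma Wmat_unit {x y : ℂ} (h : (starRingEnd ℂ) x * x + (starRingEnd ℂ) y * y = 1) :
    (Wmat x y).det = 1 ∧ (Wmat x y)ᴴ * Wmat x y = 1 ∧ Wmat x y * (Wmat x y)ᴴ = 1 := by
  have hdet : (Wmat x y).det = 1 := by rw [Wmat_det]; rw [← h]; ring
  refine ⟨hdet, ?_, ?_⟩
  · rw [← Wmat_adjugate, Matrix.adjugate_mul, hdet, one_smul]
  · rw [← Wmat_adjugate, Matrix.mul_adjugate, hdet, one_smul]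

lemma normSq_eq (z : ℂ) : (starRingEnd ℂ) z * z = (Complex.normSq z : ℂ) := by
  rw [mul_comm, Complex.mul_conj]

lemma normalize_null (S₁ S₂ : Matrix (Fin 2) (Fin 2) ℂ) (x y : ℂ) (hxy : ¬(x = 0 ∧ y = 0))
    (hq₁ : QF S₁ ![x, y] = 0) (hq₂ : QF S₂ ![x, y] = 0) :
    ∃ v : Fin 2 → ℂ, star v ⬝ᵥ v = 1 ∧ QF S₁ v = 0 ∧ QF S₂ v = 0 := by
  set N : ℝ := Complex.normSq x + Complex.normSq y with hN
  have hNpos : 0 < N := by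
    rcases not_and_or.mp hxy with h | h
    · have := Complex.normSq_pos.mpr h
      have := Complex.normSq_nonneg y
      positivity
    · have := Complex.normSq_pos.mpr h
      have := Complex.normSq_nonneg x
      positivity
  set n : ℝ := Real.sqrt N with hn
  have hnpos : 0 < n := Real.sqrt_pos.mpr hNpos
  have hn2 : (n : ℝ) * n = N := Real.mul_self_sqrt hNpos.le
  have hnne : (n : ℂ) ≠ 0 := by exact_mod_cast hnpos.ne'
  refine ⟨![x / n, y / n], ?_, ?_, ?_⟩
  · simp only [dotProduct, Fin.sum_univ_two, Pi.star_apply, Matrix.cons_val_zero,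
      Matrix.cons_val_one, Matrix.head_cons, Complex.star_def]
    rw [map_div₀, map_div₀, Complex.conj_ofReal]
    rw [div_mul_div_comm, div_mul_div_comm, ← add_div, normSq_eq, normSq_eq]
    rw [div_eq_one_iff_eq (by simpa using hnne)]
    rw [← Complex.ofReal_mul, ← Complex.ofReal_add]
    norm_cast
    linarith [hn2]
  · have e1 := QF_eq S₁ ![x / n, y / n]
    have e2 := QF_eq S₁ ![x, y]
    rw [hq₁] at e2
    rw [e1]
    simp only [Matrix.cons_val_zero, Matrix.cons_val_one, Matrix.head_cons, map_div₀,
      Complex.conj_ofReal] at e1 e2 ⊢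
    field_simp
    linear_combination e2.symm
  · have e1 := QF_eq S₂ ![x / n, y / n]
    have e2 := QF_eq S₂ ![x, y]
    rw [hq₂] at e2
    rw [e1]
    simp only [Matrix.cons_val_zero, Matrix.cons_val_one, Matrix.head_cons, map_div₀,
      Complex.conj_ofReal] at e1 e2 ⊢
    field_simp
    linear_combination e2.symm

lemma herm_10 {S : Matrix (Fin 2) (Fin 2) ℂ} (h : Sᴴ = S) :
    S 1 0 = (starRingEnd ℂ) (S 0 1) := by
  conv_lhs => rw [← h]
  simp [Matrix.conjTranspose_apply]

lemma herm_diag {S : Matrix (Fin 2) (Fin 2) ℂ} (h : Sᴴ = S) (i : Fin 2) :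
    S i i = ((S i i).re : ℂ) := by
  have : (starRingEnd ℂ) (S i i) = S i i := by
    conv_rhs => rw [← h]; simp [Matrix.conjTranspose_apply]
  exact ((Complex.conj_eq_iff_re).mp this).symm

lemma det_herm {S : Matrix (Fin 2) (Fin 2) ℂ} (h : Sᴴ = S) :
    S.det = (((S 0 0).re * (S 1 1).re - Complex.normSq (S 0 1) : ℝ) : ℂ) := by
  rw [Matrix.det_fin_two, herm_10 h]
  nth_rewrite 1 [herm_diag h 0, herm_diag h 1]
  rw [mul_comm (S 0 1)]
  rw [normSq_eq]
  push_cast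
  ring

lemma single_null (S : Matrix (Fin 2) (Fin 2) ℂ) (hherm : Sᴴ = S) (hdet : S.det ≤ 0) :
    ∃ v : Fin 2 → ℂ, star v ⬝ᵥ v = 1 ∧ QF S v = 0 := by
  set a : ℝ := (S 0 0).re with ha_def
  set d : ℝ := (S 1 1).re with hd_def
  set b : ℂ := S 0 1 with hb_def
  have hdet' : a * d - Complex.normSq b ≤ 0 := by
    rw [det_herm hherm] at hdet
    exact_mod_cast hdet
  by_cases ha : a = 0
  · refine ⟨![1, 0], ?_, ?_⟩
    · simp [dotProduct, Fin.sum_univ_two]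
    · rw [QF_eq]
      simp only [Matrix.cons_val_zero, Matrix.cons_val_one, Matrix.head_cons, _root_.map_one, mul_zero,
        mul_one, one_mul, map_zero, zero_mul, add_zero]
      rw [herm_diag hherm 0, ← ha_def, ha]
      simp
  · set η : ℝ := Real.sqrt (Complex.normSq b - a * d) with hη
    have hη2 : (η : ℝ) * η = Complex.normSq b - a * d :=
      Real.mul_self_sqrt (by linarith)
    have := normalize_null S S (-b + η) (a : ℂ) (by simp [ha]) ?_ ?_
    · obtain ⟨v, hv, h1, _⟩ := this
      exact ⟨v, hv, h1⟩
    all_goals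
      rw [QF_eq]
      simp only [Matrix.cons_val_zero, Matrix.cons_val_one, Matrix.head_cons, map_add, map_neg,
        Complex.conj_ofReal]
      rw [herm_10 hherm]
      nth_rewrite 1 [herm_diag hherm 0, herm_diag hherm 1]
      rw [← ha_def, ← hd_def, ← hb_def]
      have hcb : (starRingEnd ℂ) b * b = (Complex.normSq b : ℂ) := normSq_eq b
      have hη2' : (η : ℂ) * η = (Complex.normSq b : ℂ) - a * d := by
        rw [← Complex.ofReal_mul, hη2]; push_cast; ring
      linear_combination (a : ℂ) * hη2' - (a:ℂ) * hcb

lemma QF_e0 (S : Matrix (Fin 2) (Fin 2) ℂ) : QF S ![1, 0] = S 0 0 := by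
  rw [QF_eq]; simp

lemma unit_e0 : star (![1, 0] : Fin 2 → ℂ) ⬝ᵥ ![1, 0] = 1 := by
  simp [dotProduct, Fin.sum_univ_two]

lemma main_con (S₁ S₂ : Matrix (Fin 2) (Fin 2) ℂ) (h₁ : S₁ᴴ = S₁) (h₂ : S₂ᴴ = S₂)
    (h00 : S₁ 0 0 = 0) (hdet₂ : S₂.det ≤ 0) (hF : 0 ≤ F1 S₁ S₂) :
    ∃ v : Fin 2 → ℂ, star v ⬝ᵥ v = 1 ∧ QF S₁ v = 0 ∧ QF S₂ v = 0 := by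
  set b₁ : ℂ := S₁ 0 1 with hb₁_def
  set d₁ : ℝ := (S₁ 1 1).re with hd₁_def
  set a₂ : ℝ := (S₂ 0 0).re with ha₂_def
  set b₂ : ℂ := S₂ 0 1 with hb₂_def
  set d₂ : ℝ := (S₂ 1 1).re with hd₂_def
  have hS₁ : S₁ = !![0, b₁; (starRingEnd ℂ) b₁, (d₁ : ℂ)] := by
    rw [Matrix.eta_fin_two S₁, herm_10 h₁, h00]
    nth_rewrite 1 [herm_diag h₁ 1]
    rfl
  have hS₂ : S₂ = !![(a₂ : ℂ), b₂; (starRingEnd ℂ) b₂, (d₂ : ℂ)] := by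
    rw [Matrix.eta_fin_two S₂, herm_10 h₂]
    nth_rewrite 1 [herm_diag h₂ 0, herm_diag h₂ 1]
    rfl
  set s : ℝ := (b₁ * (starRingEnd ℂ) b₂).re with hs_def
  set t : ℝ := (b₁ * (starRingEnd ℂ) b₂).im with ht_def
  set β : ℝ := Complex.normSq b₁ with hβ_def
  set D : ℝ := 4*t^2 - a₂^2*d₁^2 + 4*a₂*s*d₁ - 4*a₂*β*d₂ with hD_def
  have hF1D : F1 S₁ S₂ = (D : ℂ) := by
    rw [hS₁, hS₂, F1_explicit]
    apply Complex.ext <;>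
      simp [hD_def, hs_def, ht_def, hβ_def, Complex.normSq_apply, Complex.ext_iff,
        Complex.add_re, Complex.add_im, Complex.sub_re, Complex.sub_im, Complex.mul_re,
        Complex.mul_im, pow_two] <;>
      ring
  have hD0 : 0 ≤ D := by
    rw [hF1D] at hF
    exact_mod_cast hF
  by_cases hb₁ : b₁ = 0
  · by_cases hd₁ : d₁ = 0
    · -- S₁ = 0
      obtain ⟨v, hv, hq2⟩ := single_null S₂ h₂ hdet₂
      refine ⟨v, hv, ?_, hq2⟩
      rw [QF_eq, hS₁]
      simp [hb₁, hd₁]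
    · -- F1 = -a₂²d₁² ≥ 0 forces a₂ = 0
      have hs0 : s = 0 := by simp [hs_def, hb₁]
      have ht0 : t = 0 := by simp [ht_def, hb₁]
      have hβ0 : β = 0 := by simp [hβ_def, hb₁]
      have ha₂ : a₂ = 0 := by
        have hD0' := hD0
        rw [hD_def, hs0, ht0, hβ0] at hD0'
        have : a₂ * d₁ = 0 := by nlinarith [sq_nonneg (a₂ * d₁)]
        rcases mul_eq_zero.mp this with h | h
        · exact h
        · exact absurd h hd₁
      refine ⟨![1, 0], unit_e0, ?_, ?_⟩
      · rw [QF_e0]; exact h00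
      · rw [QF_e0, herm_diag h₂ 0, ← ha₂_def, ha₂]; simp
  · by_cases ha₂ : a₂ = 0
    · refine ⟨![1, 0], unit_e0, ?_, ?_⟩
      · rw [QF_e0]; exact h00
      · rw [QF_e0, herm_diag h₂ 0, ← ha₂_def, ha₂]; simp
    · -- main construction
      have hβpos : 0 < β := by
        rw [hβ_def]; exact Complex.normSq_pos.mpr hb₁
      set e : ℝ := Real.sqrt D with he_def
      have he2 : e * e = D := Real.mul_self_sqrt hD0
      set w : ℂ := ((-(a₂*d₁) : ℝ) : ℂ) + ((2*t + e : ℝ) : ℂ) * Complex.I with hw_def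
      have hy : ((2 * β * a₂ : ℝ) : ℂ) ≠ 0 := by
        simp only [ne_eq, Complex.ofReal_eq_zero]
        exact mul_ne_zero (mul_ne_zero two_ne_zero hβpos.ne') ha₂
      refine normalize_null S₁ S₂ (b₁ * w) ((2 * β * a₂ : ℝ) : ℂ) (fun h => hy h.2) ?_ ?_
      · rw [QF_eq, hS₁]
        simp only [Matrix.cons_val', Matrix.cons_val_zero, Matrix.cons_val_one,
          Matrix.head_cons, Matrix.empty_val', Matrix.cons_val_fin_one, Matrix.head_fin_const]
        apply Complex.ext <;>
          simp [hw_def, hs_def, ht_def, hβ_def, Complex.normSq_apply, Complex.add_re,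
            Complex.add_im, Complex.sub_re, Complex.sub_im, Complex.mul_re, Complex.mul_im] <;>
          ring
      · rw [QF_eq, hS₂]
        simp only [Matrix.cons_val', Matrix.cons_val_zero, Matrix.cons_val_one,
          Matrix.head_cons, Matrix.empty_val', Matrix.cons_val_fin_one, Matrix.head_fin_const]
        have he2c : e * e = 4*(b₁.im*b₂.re - b₁.re*b₂.im)^2 - a₂^2*d₁^2
            + 4*a₂*(b₁.re*b₂.re + b₁.im*b₂.im)*d₁ - 4*a₂*(b₁.re^2 + b₁.im^2)*d₂ := by
          rw [he2, hD_def, hs_def, ht_def, hβ_def]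
          simp [Complex.mul_re, Complex.mul_im, Complex.normSq_apply]
          ring
        apply Complex.ext <;>
          simp [hw_def, hs_def, ht_def, hβ_def, Complex.normSq_apply, Complex.add_re,
            Complex.add_im, Complex.sub_re, Complex.sub_im, Complex.mul_re, Complex.mul_im]
        · linear_combination (a₂ * (b₁.re^2 + b₁.im^2)) * he2c
        · linear_combination (0:ℝ) * he2c

lemma mulVec_unit (W : Matrix (Fin 2) (Fin 2) ℂ) (h : Wᴴ * W = 1) (u : Fin 2 → ℂ) :
    star (W.mulVec u) ⬝ᵥ (W.mulVec u) = star u ⬝ᵥ u := by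
  have h00 := congrFun (congrFun h 0) 0
  have h01 := congrFun (congrFun h 0) 1
  have h10 := congrFun (congrFun h 1) 0
  have h11 := congrFun (congrFun h 1) 1
  simp only [Matrix.mul_apply, Fin.sum_univ_two, Matrix.conjTranspose_apply, Matrix.one_apply,
    if_true, if_false, Fin.zero_eq_one_iff, Fin.one_eq_zero_iff] at h00 h01 h10 h11
  simp only [Matrix.mulVec, dotProduct, Fin.sum_univ_two, Pi.star_apply, Complex.star_def,
    map_add, _root_.map_mul]
  norm_num at h00 h01 h10 h11 ⊢
  linear_combination ((starRingEnd ℂ) (u 0) * u 0) * h00 + ((starRingEnd ℂ) (u 0) * u 1) * h01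
    + ((starRingEnd ℂ) (u 1) * u 0) * h10 + ((starRingEnd ℂ) (u 1) * u 1) * h11

lemma Wmat_col (v : Fin 2 → ℂ) : (fun i => Wmat (v 0) (v 1) i 0) = v := by
  funext i
  fin_cases i <;> simp [Wmat]

lemma unit_coords {v : Fin 2 → ℂ} (h : star v ⬝ᵥ v = 1) :
    (starRingEnd ℂ) (v 0) * v 0 + (starRingEnd ℂ) (v 1) * v 1 = 1 := by
  simpa [dotProduct, Fin.sum_univ_two, Complex.star_def] using h

lemma key_lemma (S₁ S₂ : Matrix (Fin 2) (Fin 2) ℂ) (h₁ : S₁ᴴ = S₁) (h₂ : S₂ᴴ = S₂) :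
    (∃ v : Fin 2 → ℂ, star v ⬝ᵥ v = 1 ∧ QF S₁ v = 0 ∧ QF S₂ v = 0) ↔
      (S₁.det ≤ 0 ∧ S₂.det ≤ 0 ∧ 0 ≤ F1 S₁ S₂) := by
  constructor
  · rintro ⟨v, hv, hq₁, hq₂⟩
    set W : Matrix (Fin 2) (Fin 2) ℂ := Wmat (v 0) (v 1) with hW_def
    obtain ⟨hdet, hWH, hWW⟩ := Wmat_unit (unit_coords hv)
    set T₁ : Matrix (Fin 2) (Fin 2) ℂ := Wᴴ * S₁ * W with hT₁_def
    set T₂ : Matrix (Fin 2) (Fin 2) ℂ := Wᴴ * S₂ * W with hT₂_def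
    have hT₁h : T₁ᴴ = T₁ := herm_conj W S₁ h₁
    have hT₂h : T₂ᴴ = T₂ := herm_conj W S₂ h₂
    have hT₁00 : T₁ 0 0 = 0 := by
      rw [hT₁_def, entry00, hW_def, Wmat_col]; exact hq₁
    have hT₂00 : T₂ 0 0 = 0 := by
      rw [hT₂_def, entry00, hW_def, Wmat_col]; exact hq₂
    have hdet1 : S₁.det = T₁.det := (det_conj W S₁ hdet).symm
    have hdet2 : S₂.det = T₂.det := (det_conj W S₂ hdet).symm
    have detT : ∀ T : Matrix (Fin 2) (Fin 2) ℂ, Tᴴ = T → T 0 0 = 0 →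
        T.det = ((-Complex.normSq (T 0 1) : ℝ) : ℂ) := by
      intro T hh h0
      rw [Matrix.det_fin_two, h0, herm_10 hh, mul_comm (T 0 1), normSq_eq]
      push_cast
      ring
    have hadj : W.adjugate = Wᴴ := Wmat_adjugate _ _
    refine ⟨?_, ?_, ?_⟩
    · rw [hdet1, detT T₁ hT₁h hT₁00]
      exact_mod_cast neg_nonpos.mpr (Complex.normSq_nonneg _)
    · rw [hdet2, detT T₂ hT₂h hT₂00]
      exact_mod_cast neg_nonpos.mpr (Complex.normSq_nonneg _)
    · rw [← F1_conj W S₁ S₂ hadj hdet]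
      have eT₁ : T₁ = !![0, T₁ 0 1; (starRingEnd ℂ) (T₁ 0 1), ((T₁ 1 1).re : ℂ)] := by
        rw [Matrix.eta_fin_two T₁, herm_10 hT₁h, hT₁00]
        nth_rewrite 1 [herm_diag hT₁h 1]
        rfl
      have eT₂ : T₂ = !![0, T₂ 0 1; (starRingEnd ℂ) (T₂ 0 1), ((T₂ 1 1).re : ℂ)] := by
        rw [Matrix.eta_fin_two T₂, herm_10 hT₂h, hT₂00]
        nth_rewrite 1 [herm_diag hT₂h 1]
        rfl
      have hE : F1 T₁ T₂
          = (((2 * (T₁ 0 1 * (starRingEnd ℂ) (T₂ 0 1)).im)^2 : ℝ) : ℂ) := by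
        nth_rewrite 1 [eT₁, eT₂]
        rw [F1_explicit]
        apply Complex.ext <;>
          simp [Complex.normSq_apply, Complex.add_re, Complex.add_im, Complex.sub_re,
            Complex.sub_im, Complex.mul_re, Complex.mul_im, pow_two] <;>
          ring
      rw [hE]
      exact Complex.zero_le_real.mpr (sq_nonneg _)
  · rintro ⟨hdet₁, hdet₂, hF⟩
    obtain ⟨v₀, hv₀, hq₀⟩ := single_null S₁ h₁ hdet₁
    set W : Matrix (Fin 2) (Fin 2) ℂ := Wmat (v₀ 0) (v₀ 1) with hW_def
    obtain ⟨hdet, hWH, hWW⟩ := Wmat_unit (unit_coords hv₀)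
    have hadj : W.adjugate = Wᴴ := Wmat_adjugate _ _
    have hT₁00 : (Wᴴ * S₁ * W) 0 0 = 0 := by
      rw [entry00, hW_def, Wmat_col]; exact hq₀
    have hdet2 : (Wᴴ * S₂ * W).det ≤ 0 := by rw [det_conj W S₂ hdet]; exact hdet₂
    have hF' : 0 ≤ F1 (Wᴴ * S₁ * W) (Wᴴ * S₂ * W) := by
      rw [F1_conj W S₁ S₂ hadj hdet]; exact hF
    obtain ⟨v', hv', hq₁', hq₂'⟩ := main_con (Wᴴ * S₁ * W) (Wᴴ * S₂ * W)
      (herm_conj W S₁ h₁) (herm_conj W S₂ h₂) hT₁00 hdet2 hF'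
    refine ⟨W.mulVec v', ?_, ?_, ?_⟩
    · rw [mulVec_unit W hWH v']; exact hv'
    · rw [← QF_conj W S₁ v']; exact hq₁'
    · rw [← QF_conj W S₂ v']; exact hq₂'

lemma QF_S (A : Matrix (Fin 2) (Fin 2) ℂ) (c : ℂ) (v : Fin 2 → ℂ) :
    QF (Aᴴ * A - c • 1) v
      = star (A.mulVec v) ⬝ᵥ (A.mulVec v) - c * (star v ⬝ᵥ v) := by
  rw [QF_eq]
  simp [Matrix.mulVec, dotProduct, Fin.sum_univ_two, Matrix.sub_apply, Matrix.smul_apply,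
    Matrix.one_apply, Matrix.mul_apply, Matrix.conjTranspose_apply, Complex.star_def,
    map_add, _root_.map_mul]
  ring

lemma S_herm (A : Matrix (Fin 2) (Fin 2) ℂ) (c : ℂ) (hc : (starRingEnd ℂ) c = c) :
    (Aᴴ * A - c • 1)ᴴ = Aᴴ * A - c • 1 := by
  rw [Matrix.conjTranspose_sub, Matrix.conjTranspose_mul, Matrix.conjTranspose_conjTranspose,
    Matrix.conjTranspose_smul, Matrix.conjTranspose_one]
  congr 1
  rw [Complex.star_def, hc]

lemma bt_of {M : Matrix (Fin 2) (Fin 2) ℂ} (h : M 1 0 = 0) : M.BlockTriangular id := by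
  intro i j hij
  fin_cases i <;> fin_cases j <;> simp_all <;> omega

lemma colMulVec (A V : Matrix (Fin 2) (Fin 2) ℂ) (i : Fin 2) :
    (A * V) i 0 = A.mulVec (fun k => V k 0) i := by
  simp [Matrix.mul_apply, Matrix.mulVec, dotProduct]

/-- **Joint triangularization of two `2 × 2` matrices with diagonal `(r, 1/r)`.**
For complex `2 × 2` matrices `A₁, A₂` of unit determinant and `r > 0`, there exist unitary
matrices `U₁, U₂, V` such that both `U₁ᴴ * A₁ * V` and `U₂ᴴ * A₂ * V` are upper triangular
with diagonal entries `r` and `1/r` (in this order) iff `det(A₁ᴴA₁ − r²I) ≤ 0`,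
`det(A₂ᴴA₂ − r²I) ≤ 0` and `F₁(A₁ᴴA₁ − r²I, A₂ᴴA₂ − r²I) ≥ 0`. -/
theorem two_joint_triangularization_r (A₁ A₂ : Matrix (Fin 2) (Fin 2) ℂ)
    (h₁ : A₁.det = 1) (h₂ : A₂.det = 1) (r : ℝ) (hr : 0 < r) :
    (∃ U₁ U₂ V : Matrix (Fin 2) (Fin 2) ℂ,
        U₁ ∈ Matrix.unitaryGroup (Fin 2) ℂ ∧ U₂ ∈ Matrix.unitaryGroup (Fin 2) ℂ ∧
        V ∈ Matrix.unitaryGroup (Fin 2) ℂ ∧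
        (U₁ᴴ * A₁ * V).BlockTriangular id ∧
        (U₁ᴴ * A₁ * V) 0 0 = (r : ℂ) ∧ (U₁ᴴ * A₁ * V) 1 1 = ((r : ℂ))⁻¹ ∧
        (U₂ᴴ * A₂ * V).BlockTriangular id ∧
        (U₂ᴴ * A₂ * V) 0 0 = (r : ℂ) ∧ (U₂ᴴ * A₂ * V) 1 1 = ((r : ℂ))⁻¹) ↔
      ((A₁ᴴ * A₁ - ((r : ℂ) ^ 2) • 1).det ≤ 0 ∧
        (A₂ᴴ * A₂ - ((r : ℂ) ^ 2) • 1).det ≤ 0 ∧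
        0 ≤ F1 (A₁ᴴ * A₁ - ((r : ℂ) ^ 2) • 1) (A₂ᴴ * A₂ - ((r : ℂ) ^ 2) • 1)) := by
  have hrne : (r : ℂ) ≠ 0 := by exact_mod_cast hr.ne'
  have hc : (starRingEnd ℂ) ((r : ℂ) ^ 2) = (r : ℂ) ^ 2 := by
    rw [_root_.map_pow, Complex.conj_ofReal]
  rw [← key_lemma _ _ (S_herm A₁ _ hc) (S_herm A₂ _ hc)]
  constructor
  · rintro ⟨U₁, U₂, V, hU₁, hU₂, hV, ht₁, h001, _, ht₂, h002, _⟩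
    have hVV : Vᴴ * V = 1 := by
      rw [← Matrix.star_eq_conjTranspose]
      exact (Matrix.mem_unitaryGroup_iff'.mp hV)
    set v : Fin 2 → ℂ := fun i => V i 0 with hv_def
    have hunit : star v ⬝ᵥ v = 1 := by
      have h00 := congrFun (congrFun hVV 0) 0
      simp only [Matrix.mul_apply, Fin.sum_univ_two, Matrix.conjTranspose_apply,
        Matrix.one_apply_eq] at h00
      simp only [dotProduct, Fin.sum_univ_two, Pi.star_apply, Complex.star_def, hv_def]
      exact h00
    have key_A : ∀ (U A : Matrix (Fin 2) (Fin 2) ℂ), U ∈ Matrix.unitaryGroup (Fin 2) ℂ →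
        (Uᴴ * A * V).BlockTriangular id → (Uᴴ * A * V) 0 0 = (r : ℂ) →
        star (A.mulVec v) ⬝ᵥ (A.mulVec v) = (r : ℂ)^2 := by
      intro U A hU hbt h00
      have hUU : U * Uᴴ = 1 := by
        rw [← Matrix.star_eq_conjTranspose]
        exact (Matrix.mem_unitaryGroup_iff.mp hU)
      have hUHU : Uᴴ * U = 1 := by
        rw [← Matrix.star_eq_conjTranspose]
        exact (Matrix.mem_unitaryGroup_iff'.mp hU)
      have h10 : (Uᴴ * A * V) 1 0 = 0 := hbt (by norm_num)
      have hAV : A * V = U * (Uᴴ * A * V) := by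
        rw [← Matrix.mul_assoc, ← Matrix.mul_assoc, hUU, Matrix.one_mul]
      have hAv : ∀ i, A.mulVec v i = (r : ℂ) * U i 0 := by
        intro i
        rw [← colMulVec, hAV]
        rw [Matrix.mul_apply, Fin.sum_univ_two, h10, h00]
        ring
      have hU00 := congrFun (congrFun hUHU 0) 0
      simp only [Matrix.mul_apply, Fin.sum_univ_two, Matrix.conjTranspose_apply,
        Matrix.one_apply_eq, Complex.star_def] at hU00
      simp only [dotProduct, Fin.sum_univ_two, Pi.star_apply, Complex.star_def, hAv,
        _root_.map_mul, Complex.conj_ofReal]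
      linear_combination ((r:ℂ)^2) * hU00
    refine ⟨v, hunit, ?_, ?_⟩
    · rw [QF_S, key_A U₁ A₁ hU₁ ht₁ h001, hunit]; ring
    · rw [QF_S, key_A U₂ A₂ hU₂ ht₂ h002, hunit]; ring
  · rintro ⟨v, hunit, hq₁, hq₂⟩
    have hnorm : ∀ A : Matrix (Fin 2) (Fin 2) ℂ, QF (Aᴴ * A - ((r : ℂ)^2) • 1) v = 0 →
        star (A.mulVec v) ⬝ᵥ (A.mulVec v) = (r : ℂ)^2 := by
      intro A hq
      rw [QF_S, hunit, mul_one, sub_eq_zero] at hq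
      exact hq
    have hn₁ := hnorm A₁ hq₁
    have hn₂ := hnorm A₂ hq₂
    -- construct the unitaries
    set u₁ : Fin 2 → ℂ := fun i => (r : ℂ)⁻¹ * A₁.mulVec v i with hu₁_def
    set u₂ : Fin 2 → ℂ := fun i => (r : ℂ)⁻¹ * A₂.mulVec v i with hu₂_def
    have huu : ∀ (A : Matrix (Fin 2) (Fin 2) ℂ) (u : Fin 2 → ℂ),
        (∀ i, u i = (r : ℂ)⁻¹ * A.mulVec v i) →
        star (A.mulVec v) ⬝ᵥ (A.mulVec v) = (r : ℂ)^2 →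
        ((starRingEnd ℂ) (u 0) * u 0 + (starRingEnd ℂ) (u 1) * u 1 = 1
          ∧ ∀ i, A.mulVec v i = (r : ℂ) * u i) := by
      intro A u hu hn
      simp only [dotProduct, Fin.sum_univ_two, Pi.star_apply, Complex.star_def] at hn
      constructor
      · rw [hu 0, hu 1]
        simp only [_root_.map_mul, map_inv₀, Complex.conj_ofReal]
        have hone : ((r:ℂ))⁻¹ * ((r:ℂ))⁻¹ * ((r:ℂ)^2) = 1 := by
          field_simp
        linear_combination ((r:ℂ)⁻¹ * (r:ℂ)⁻¹) * hn + hone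
      · intro i
        rw [hu i, ← mul_assoc, mul_inv_cancel₀ hrne, one_mul]
    obtain ⟨hun₁, hAv₁⟩ := huu A₁ u₁ (fun i => rfl) hn₁
    obtain ⟨hun₂, hAv₂⟩ := huu A₂ u₂ (fun i => rfl) hn₂
    have hvco := unit_coords hunit
    obtain ⟨hdV, hVH, hVV⟩ := Wmat_unit hvco
    obtain ⟨hdU₁, hU₁H, hU₁U⟩ := Wmat_unit hun₁
    obtain ⟨hdU₂, hU₂H, hU₂U⟩ := Wmat_unit hun₂
    refine ⟨Wmat (u₁ 0) (u₁ 1), Wmat (u₂ 0) (u₂ 1), Wmat (v 0) (v 1), ?_, ?_, ?_, ?_⟩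
    · rw [Matrix.mem_unitaryGroup_iff, Matrix.star_eq_conjTranspose]; exact hU₁U
    · rw [Matrix.mem_unitaryGroup_iff, Matrix.star_eq_conjTranspose]; exact hU₂U
    · rw [Matrix.mem_unitaryGroup_iff, Matrix.star_eq_conjTranspose]; exact hVV
    have hT : ∀ (A : Matrix (Fin 2) (Fin 2) ℂ) (u : Fin 2 → ℂ),
        A.det = 1 → (∀ i, A.mulVec v i = (r : ℂ) * u i) →
        ((starRingEnd ℂ) (u 0) * u 0 + (starRingEnd ℂ) (u 1) * u 1 = 1) →
        ((Wmat (u 0) (u 1))ᴴ * A * Wmat (v 0) (v 1)).BlockTriangular id ∧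
        ((Wmat (u 0) (u 1))ᴴ * A * Wmat (v 0) (v 1)) 0 0 = (r : ℂ) ∧
        ((Wmat (u 0) (u 1))ᴴ * A * Wmat (v 0) (v 1)) 1 1 = ((r : ℂ))⁻¹ := by
      intro A u hdA hAv huco
      have hAW : ∀ i, (A * Wmat (v 0) (v 1)) i 0 = (r : ℂ) * u i := by
        intro i
        rw [colMulVec]
        have : (fun k => Wmat (v 0) (v 1) k 0) = v := Wmat_col v
        rw [this]
        exact hAv i
      have h00 : ((Wmat (u 0) (u 1))ᴴ * A * Wmat (v 0) (v 1)) 0 0 = (r : ℂ) := by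
        rw [Matrix.mul_assoc, Matrix.mul_apply, Fin.sum_univ_two]
        rw [Matrix.conjTranspose_apply, Matrix.conjTranspose_apply, hAW 0, hAW 1]
        have e0 : Wmat (u 0) (u 1) 0 0 = u 0 := by simp [Wmat]
        have e1 : Wmat (u 0) (u 1) 1 0 = u 1 := by simp [Wmat]
        rw [e0, e1]
        simp only [Complex.star_def]
        linear_combination (r : ℂ) * huco
      have h10 : ((Wmat (u 0) (u 1))ᴴ * A * Wmat (v 0) (v 1)) 1 0 = 0 := by
        rw [Matrix.mul_assoc, Matrix.mul_apply, Fin.sum_univ_two]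
        rw [Matrix.conjTranspose_apply, Matrix.conjTranspose_apply, hAW 0, hAW 1]
        have e0 : Wmat (u 0) (u 1) 0 1 = -(starRingEnd ℂ) (u 1) := by simp [Wmat]
        have e1 : Wmat (u 0) (u 1) 1 1 = (starRingEnd ℂ) (u 0) := by simp [Wmat]
        rw [e0, e1]
        simp only [Complex.star_def, map_neg, Complex.conj_conj]
        ring
      have hdT : ((Wmat (u 0) (u 1))ᴴ * A * Wmat (v 0) (v 1)).det = 1 := by
        rw [Matrix.det_mul, Matrix.det_mul, Matrix.det_conjTranspose, hdA]
        have hdu : (Wmat (u 0) (u 1)).det = 1 := by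
          rw [Wmat_det]; rw [← huco]; ring
        have hdv : (Wmat (v 0) (v 1)).det = 1 := by
          rw [Wmat_det]; rw [← hvco]; ring
        rw [hdu, hdv]
        simp
      refine ⟨bt_of h10, h00, ?_⟩
      rw [Matrix.det_fin_two, h10, h00] at hdT
      field_simp at hdT ⊢
      linear_combination hdT
    obtain ⟨hbt₁, h001, h111⟩ := hT A₁ u₁ h₁ hAv₁ hun₁
    obtain ⟨hbt₂, h002, h112⟩ := hT A₂ u₂ h₂ hAv₂ hun₂
    exact ⟨hbt₁, h001, h111, hbt₂, h002, h112⟩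
end

section
/- Let S_1 and S_2 be complex Hermitian 2×2 matrices. Then there exists a nonzero vector v ∈ ℂ² with v†S_1v = 0 and v†S_2v = 0 if and only if the following three conditions hold: det(S_1) ≤ 0, det(S_2) ≤ 0, and F_1(S_1, S_2) ≥ 0. -/
open Matrix ComplexOrder

lemma isotropicDet (a p q c x₁ y₁ x₂ y₂ : ℝ)
    (hv : ¬(x₁ = 0 ∧ y₁ = 0 ∧ x₂ = 0 ∧ y₂ = 0))
    (hQ : a*(x₁^2+y₁^2) + 2*(p*(x₁*x₂+y₁*y₂) - q*(x₁*y₂-y₁*x₂)) + c*(x₂^2+y₂^2) = 0) :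
    a*c - (p^2+q^2) ≤ 0 := by
  rcases eq_or_lt_of_le (by positivity : (0:ℝ) ≤ x₁^2+y₁^2) with hP | hP
  · have hx1 : x₁ = 0 := by nlinarith [sq_nonneg x₁, sq_nonneg y₁]
    have hy1 : y₁ = 0 := by nlinarith [sq_nonneg x₁, sq_nonneg y₁]
    have hR : 0 < x₂^2+y₂^2 := by
      rcases eq_or_lt_of_le (by positivity : (0:ℝ) ≤ x₂^2+y₂^2) with h' | h'
      · exact absurd ⟨hx1, hy1, by nlinarith [sq_nonneg x₂, sq_nonneg y₂],
          by nlinarith [sq_nonneg x₂, sq_nonneg y₂]⟩ hv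
      · exact h'
    have hc : c = 0 := by
      have : c*(x₂^2+y₂^2) = 0 := by
        rw [hx1, hy1] at hQ; linarith [hQ]
      exact (mul_eq_zero.1 this).resolve_right (by linarith)
    rw [hc]; nlinarith [sq_nonneg p, sq_nonneg q]
  · rcases eq_or_lt_of_le (by positivity : (0:ℝ) ≤ x₂^2+y₂^2) with hR | hR
    · have hx2 : x₂ = 0 := by nlinarith [sq_nonneg x₂, sq_nonneg y₂]
      have hy2 : y₂ = 0 := by nlinarith [sq_nonneg x₂, sq_nonneg y₂]
      have ha : a = 0 := by
        have : a*(x₁^2+y₁^2) = 0 := by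
          rw [hx2, hy2] at hQ; linarith [hQ]
        exact (mul_eq_zero.1 this).resolve_right (by linarith)
      rw [ha]; nlinarith [sq_nonneg p, sq_nonneg q]
    · have cs : (p*(x₁*x₂+y₁*y₂) - q*(x₁*y₂-y₁*x₂))^2
          ≤ (p^2+q^2)*((x₁^2+y₁^2)*(x₂^2+y₂^2)) := by
        nlinarith [sq_nonneg (p*(x₁*y₂-y₁*x₂) + q*(x₁*x₂+y₁*y₂))]
      have hT : a*(x₁^2+y₁^2) + c*(x₂^2+y₂^2)
          = -2*(p*(x₁*x₂+y₁*y₂) - q*(x₁*y₂-y₁*x₂)) := by linarith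
      have h4 : (a*(x₁^2+y₁^2) + c*(x₂^2+y₂^2))^2
          = 4*(p*(x₁*x₂+y₁*y₂) - q*(x₁*y₂-y₁*x₂))^2 := by rw [hT]; ring
      nlinarith [cs, h4, sq_nonneg (a*(x₁^2+y₁^2) - c*(x₂^2+y₂^2)), mul_pos hP hR]


lemma discrim_le (d₁ d₂ B : ℝ) (hd₁ : d₁ ≤ 0) (hd₂ : d₂ ≤ 0)
    (hP : ∀ x y : ℝ, x^2*d₁ + x*y*B + y^2*d₂ ≤ 0) : B^2 ≤ 4*d₁*d₂ := by
  rcases lt_or_eq_of_le hd₁ with h1 | h1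
  · nlinarith [hP B (-2*d₁)]
  · rcases lt_or_eq_of_le hd₂ with h2 | h2
    · nlinarith [hP (-2*d₂) B]
    · have hB0 : B = 0 := by
        have k1 := hP B 1
        nlinarith [k1, sq_nonneg B]
      nlinarith [hB0, h1, h2, sq_nonneg B]

lemma forwardCore (a₁ p₁ q₁ c₁ a₂ p₂ q₂ c₂ x₁ y₁ x₂ y₂ : ℝ)
    (hv : ¬(x₁ = 0 ∧ y₁ = 0 ∧ x₂ = 0 ∧ y₂ = 0))
    (hQ1 : a₁*(x₁^2+y₁^2) + 2*(p₁*(x₁*x₂+y₁*y₂) - q₁*(x₁*y₂-y₁*x₂)) + c₁*(x₂^2+y₂^2) = 0)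
    (hQ2 : a₂*(x₁^2+y₁^2) + 2*(p₂*(x₁*x₂+y₁*y₂) - q₂*(x₁*y₂-y₁*x₂)) + c₂*(x₂^2+y₂^2) = 0) :
    a₁*c₁ - (p₁^2+q₁^2) ≤ 0 ∧ a₂*c₂ - (p₂^2+q₂^2) ≤ 0 ∧
      (a₁*c₂+a₂*c₁-2*(p₁*p₂+q₁*q₂))^2
        ≤ 4*(a₁*c₁-(p₁^2+q₁^2))*(a₂*c₂-(p₂^2+q₂^2)) := by
  have hd₁ := isotropicDet a₁ p₁ q₁ c₁ x₁ y₁ x₂ y₂ hv hQ1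
  have hd₂ := isotropicDet a₂ p₂ q₂ c₂ x₁ y₁ x₂ y₂ hv hQ2
  refine ⟨hd₁, hd₂, ?_⟩
  refine discrim_le _ _ _ hd₁ hd₂ ?_
  intro x y
  have h := isotropicDet (x*a₁+y*a₂) (x*p₁+y*p₂) (x*q₁+y*q₂) (x*c₁+y*c₂)
    x₁ y₁ x₂ y₂ hv (by linear_combination x*hQ1 + y*hQ2)
  nlinarith [h]


lemma lineCircle (a₁ p₁ q₁ a₂ p₂ q₂ c₂ : ℝ) (hc₂ : c₂ ≠ 0)
    (hd₂ : a₂*c₂ ≤ p₂^2+q₂^2)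
    (hB : (a₁*c₂ - 2*(p₁*p₂+q₁*q₂))^2 ≤ 4*(p₁^2+q₁^2)*(p₂^2+q₂^2-a₂*c₂)) :
    ∃ x y : ℝ,
      a₁ + 2*(p₁*x - q₁*y) = 0 ∧
      a₂ + 2*(p₂*x - q₂*y) + c₂*(x^2+y^2) = 0 := by
  rcases eq_or_lt_of_le (by positivity : (0:ℝ) ≤ p₁^2+q₁^2) with hn | hn
  · -- degenerate line: p₁ = q₁ = 0 and a₁ = 0
    have hp1 : p₁ = 0 := by nlinarith [sq_nonneg p₁, sq_nonneg q₁]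
    have hq1 : q₁ = 0 := by nlinarith [sq_nonneg p₁, sq_nonneg q₁]
    rw [hp1, hq1] at hB
    have ha1 : a₁ = 0 := by
      have h0 : a₁*c₂ = 0 := by nlinarith [sq_nonneg (a₁*c₂), hB]
      exact (mul_eq_zero.1 h0).resolve_right hc₂
    obtain ⟨s, hs⟩ : ∃ s : ℝ, s^2 = p₂^2+q₂^2-a₂*c₂ :=
      ⟨Real.sqrt _, Real.sq_sqrt (by linarith)⟩
    refine ⟨(-p₂+s)/c₂, q₂/c₂, by rw [ha1, hp1, hq1]; ring, ?_⟩
    have expand : a₂ + 2*(p₂*((-p₂+s)/c₂) - q₂*(q₂/c₂)) + c₂*(((-p₂+s)/c₂)^2+(q₂/c₂)^2)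
        = (s^2 - (p₂^2+q₂^2-a₂*c₂))/c₂ := by
      field_simp
      ring
    rw [expand, hs, sub_self, zero_div]
  · -- genuine line
    have hn' : p₁^2+q₁^2 ≠ 0 := ne_of_gt hn
    obtain ⟨w, hw⟩ : ∃ w : ℝ,
        w^2 = 4*(p₁^2+q₁^2)*(p₂^2+q₂^2-a₂*c₂) - (a₁*c₂ - 2*(p₁*p₂+q₁*q₂))^2 :=
      ⟨Real.sqrt _, Real.sq_sqrt (by linarith)⟩
    refine ⟨(-2*p₂*(p₁^2+q₁^2) - (a₁*c₂ - 2*(p₁*p₂+q₁*q₂))*p₁ + w*q₁)/(2*c₂*(p₁^2+q₁^2)),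
            (2*q₂*(p₁^2+q₁^2) + (a₁*c₂ - 2*(p₁*p₂+q₁*q₂))*q₁ + w*p₁)/(2*c₂*(p₁^2+q₁^2)),
            ?_, ?_⟩
    · field_simp
      ring
    · have expand : a₂ + 2*(p₂*((-2*p₂*(p₁^2+q₁^2) - (a₁*c₂ - 2*(p₁*p₂+q₁*q₂))*p₁ + w*q₁)/(2*c₂*(p₁^2+q₁^2)))
            - q₂*((2*q₂*(p₁^2+q₁^2) + (a₁*c₂ - 2*(p₁*p₂+q₁*q₂))*q₁ + w*p₁)/(2*c₂*(p₁^2+q₁^2))))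
          + c₂*(((-2*p₂*(p₁^2+q₁^2) - (a₁*c₂ - 2*(p₁*p₂+q₁*q₂))*p₁ + w*q₁)/(2*c₂*(p₁^2+q₁^2)))^2
            + ((2*q₂*(p₁^2+q₁^2) + (a₁*c₂ - 2*(p₁*p₂+q₁*q₂))*q₁ + w*p₁)/(2*c₂*(p₁^2+q₁^2)))^2)
          = (w^2 - (4*(p₁^2+q₁^2)*(p₂^2+q₂^2-a₂*c₂) - (a₁*c₂ - 2*(p₁*p₂+q₁*q₂))^2))
              / (4*c₂*(p₁^2+q₁^2)) := by
        field_simp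
        ring
      rw [expand, hw, sub_self, zero_div]

lemma backAux (a₁ p₁ q₁ c₁ a₂ p₂ q₂ c₂ : ℝ) (hc₂ : c₂ ≠ 0)
    (hd₂ : a₂*c₂ - (p₂^2+q₂^2) ≤ 0)
    (hB : (a₁*c₂+a₂*c₁-2*(p₁*p₂+q₁*q₂))^2
        ≤ 4*(a₁*c₁-(p₁^2+q₁^2))*(a₂*c₂-(p₂^2+q₂^2))) :
    ∃ x₁ y₁ x₂ y₂ : ℝ, ¬(x₁ = 0 ∧ y₁ = 0 ∧ x₂ = 0 ∧ y₂ = 0) ∧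
      a₁*(x₁^2+y₁^2) + 2*(p₁*(x₁*x₂+y₁*y₂) - q₁*(x₁*y₂-y₁*x₂)) + c₁*(x₂^2+y₂^2) = 0 ∧
      a₂*(x₁^2+y₁^2) + 2*(p₂*(x₁*x₂+y₁*y₂) - q₂*(x₁*y₂-y₁*x₂)) + c₂*(x₂^2+y₂^2) = 0 := by
  set t : ℝ := -(c₁/c₂) with htdef
  -- shifted first form: a₁' = a₁ + t*a₂ etc., c₁' = 0
  have key : (a₁ + t*a₂)*c₂ - 2*((p₁+t*p₂)*p₂+(q₁+t*q₂)*q₂)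
      = (a₁*c₂+a₂*c₁-2*(p₁*p₂+q₁*q₂)) + 2*t*(a₂*c₂-(p₂^2+q₂^2)) := by
    rw [htdef]; field_simp; ring
  have key2 : ((a₁ + t*a₂)*c₂ - 2*((p₁+t*p₂)*p₂+(q₁+t*q₂)*q₂))^2
      - 4*((p₁+t*p₂)^2+(q₁+t*q₂)^2)*(p₂^2+q₂^2-a₂*c₂)
      = (a₁*c₂+a₂*c₁-2*(p₁*p₂+q₁*q₂))^2
        - 4*(a₁*c₁-(p₁^2+q₁^2))*(a₂*c₂-(p₂^2+q₂^2)) := by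
    rw [htdef]; field_simp; ring
  have hB' : ((a₁ + t*a₂)*c₂ - 2*((p₁+t*p₂)*p₂+(q₁+t*q₂)*q₂))^2
      ≤ 4*((p₁+t*p₂)^2+(q₁+t*q₂)^2)*(p₂^2+q₂^2-a₂*c₂) := by
    nlinarith [key2, hB]
  obtain ⟨x, y, h1, h2⟩ := lineCircle (a₁ + t*a₂) (p₁+t*p₂) (q₁+t*q₂) a₂ p₂ q₂ c₂ hc₂
    (by linarith) hB'
  refine ⟨1, 0, x, y, by simp, ?_, by linarith [h2]⟩
  · -- Q₁(1, x+iy) = Q₁'(1,x+iy) - t*Q₂(1,x+iy)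
    have : a₁ + 2*(p₁*x - q₁*y) + c₁*(x^2+y^2)
        = (a₁ + t*a₂ + 2*((p₁+t*p₂)*x - (q₁+t*q₂)*y))
          - t*(a₂ + 2*(p₂*x - q₂*y) + c₂*(x^2+y^2)) := by
      rw [htdef]; field_simp; ring
    rw [show (1:ℝ)^2+0^2 = 1 by norm_num]
    calc a₁*1 + 2*(p₁*(1*x+0*y) - q₁*(1*y-0*x)) + c₁*(x^2+y^2)
        = a₁ + 2*(p₁*x - q₁*y) + c₁*(x^2+y^2) := by ring
      _ = 0 := by rw [this, h1, h2]; ring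


lemma coreIff (a₁ p₁ q₁ c₁ a₂ p₂ q₂ c₂ : ℝ) :
    (∃ x₁ y₁ x₂ y₂ : ℝ, ¬(x₁ = 0 ∧ y₁ = 0 ∧ x₂ = 0 ∧ y₂ = 0) ∧
      a₁*(x₁^2+y₁^2) + 2*(p₁*(x₁*x₂+y₁*y₂) - q₁*(x₁*y₂-y₁*x₂)) + c₁*(x₂^2+y₂^2) = 0 ∧
      a₂*(x₁^2+y₁^2) + 2*(p₂*(x₁*x₂+y₁*y₂) - q₂*(x₁*y₂-y₁*x₂)) + c₂*(x₂^2+y₂^2) = 0) ↔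
    (a₁*c₁ - (p₁^2+q₁^2) ≤ 0 ∧ a₂*c₂ - (p₂^2+q₂^2) ≤ 0 ∧
      (a₁*c₂+a₂*c₁-2*(p₁*p₂+q₁*q₂))^2
        ≤ 4*(a₁*c₁-(p₁^2+q₁^2))*(a₂*c₂-(p₂^2+q₂^2))) := by
  constructor
  · rintro ⟨x₁, y₁, x₂, y₂, hv, h1, h2⟩
    exact forwardCore a₁ p₁ q₁ c₁ a₂ p₂ q₂ c₂ x₁ y₁ x₂ y₂ hv h1 h2
  · rintro ⟨hd₁, hd₂, hB⟩
    rcases eq_or_ne c₂ 0 with hc₂ | hc₂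
    · rcases eq_or_ne c₁ 0 with hc₁ | hc₁
      · exact ⟨0, 0, 1, 0, by simp, by rw [hc₁]; ring, by rw [hc₂]; ring⟩
      · obtain ⟨x₁, y₁, x₂, y₂, hv, h2, h1⟩ :=
          backAux a₂ p₂ q₂ c₂ a₁ p₁ q₁ c₁ hc₁ hd₁ (by nlinarith [hB])
        exact ⟨x₁, y₁, x₂, y₂, hv, h1, h2⟩
    · exact backAux a₁ p₁ q₁ c₁ a₂ p₂ q₂ c₂ hc₂ hd₂ hB


lemma herm_decomp (S : Matrix (Fin 2) (Fin 2) ℂ) (h : S.IsHermitian) :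
    ∃ (a c : ℝ) (b : ℂ), S = !![(a:ℂ), b; (starRingEnd ℂ) b, (c:ℂ)] := by
  refine ⟨(S 0 0).re, (S 1 1).re, S 0 1, ?_⟩
  have h00 := h.apply 0 0
  have h11 := h.apply 1 1
  have h10 := h.apply 0 1
  ext i j
  fin_cases i <;> fin_cases j <;>
    simp_all [Complex.ext_iff, Matrix.IsHermitian, Complex.conj_re, Complex.conj_im] <;>
    linarith

lemma F1_eq (a₁ c₁ a₂ c₂ : ℝ) (b₁ b₂ : ℂ) :
    F1 !![(a₁:ℂ), b₁; (starRingEnd ℂ) b₁, (c₁:ℂ)] !![(a₂:ℂ), b₂; (starRingEnd ℂ) b₂, (c₂:ℂ)]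
      = ((4*(a₁*c₁ - (b₁.re^2+b₁.im^2))*(a₂*c₂ - (b₂.re^2+b₂.im^2))
          - (a₁*c₂+a₂*c₁-2*(b₁.re*b₂.re+b₁.im*b₂.im))^2 : ℝ) : ℂ) := by
  apply Complex.ext <;>
  · simp [F1, Matrix.det_fin_two, Matrix.adjugate_fin_two, Matrix.mul_apply,
      Fin.sum_univ_two, Complex.mul_re, Complex.mul_im, ← Complex.ofReal_pow]
    ring

lemma det_eq (a c : ℝ) (b : ℂ) :
    (!![(a:ℂ), b; (starRingEnd ℂ) b, (c:ℂ)]).det = ((a*c - (b.re^2+b.im^2) : ℝ) : ℂ) := by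
  apply Complex.ext <;>
  · simp [Matrix.det_fin_two, Complex.mul_re, Complex.mul_im, ← Complex.ofReal_pow]
    ring

lemma quad_eq (a c : ℝ) (b : ℂ) (v : Fin 2 → ℂ) :
    star v ⬝ᵥ (!![(a:ℂ), b; (starRingEnd ℂ) b, (c:ℂ)]) *ᵥ v
      = ((a*((v 0).re^2+(v 0).im^2)
          + 2*(b.re*((v 0).re*(v 1).re+(v 0).im*(v 1).im)
              - b.im*((v 0).re*(v 1).im-(v 0).im*(v 1).re))
          + c*((v 1).re^2+(v 1).im^2) : ℝ) : ℂ) := by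
  apply Complex.ext <;>
  · simp [dotProduct, Matrix.mulVec, Fin.sum_univ_two, Complex.mul_re, Complex.mul_im,
      ← Complex.ofReal_pow]
    ring

lemma real_le_zero (r : ℝ) : ((r:ℂ) ≤ 0) ↔ r ≤ 0 := by
  rw [show (0:ℂ) = ((0:ℝ):ℂ) by norm_num, Complex.real_le_real]

lemma zero_le_real (r : ℝ) : ((0:ℂ) ≤ (r:ℂ)) ↔ 0 ≤ r := by
  rw [show (0:ℂ) = ((0:ℝ):ℂ) by norm_num, Complex.real_le_real]

/-- For complex Hermitian `2 × 2` matrices `S₁, S₂`, there exists a nonzero vector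
`v ∈ ℂ²` with `vᴴ S₁ v = 0` and `vᴴ S₂ v = 0` iff `det S₁ ≤ 0`, `det S₂ ≤ 0` and
`F₁(S₁, S₂) ≥ 0`. -/
theorem exists_common_isotropic_vector (S₁ S₂ : Matrix (Fin 2) (Fin 2) ℂ)
    (h₁ : S₁.IsHermitian) (h₂ : S₂.IsHermitian) :
    (∃ v : Fin 2 → ℂ, v ≠ 0 ∧ star v ⬝ᵥ S₁ *ᵥ v = 0 ∧ star v ⬝ᵥ S₂ *ᵥ v = 0) ↔
      (S₁.det ≤ 0 ∧ S₂.det ≤ 0 ∧ 0 ≤ F1 S₁ S₂) := by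
  obtain ⟨a₁, c₁, b₁, rfl⟩ := herm_decomp S₁ h₁
  obtain ⟨a₂, c₂, b₂, rfl⟩ := herm_decomp S₂ h₂
  rw [det_eq, det_eq, F1_eq, real_le_zero, real_le_zero, zero_le_real]
  have hiff := coreIff a₁ b₁.re b₁.im c₁ a₂ b₂.re b₂.im c₂
  constructor
  · rintro ⟨v, hv, e1, e2⟩
    rw [quad_eq, Complex.ofReal_eq_zero] at e1 e2
    have := hiff.1 ⟨(v 0).re, (v 0).im, (v 1).re, (v 1).im, ?_, e1, e2⟩
    · exact ⟨this.1, this.2.1, by linarith [this.2.2]⟩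
    · rintro ⟨k1, k2, k3, k4⟩
      apply hv
      funext i
      fin_cases i <;> exact Complex.ext (by assumption) (by assumption)
  · rintro ⟨hd₁, hd₂, hF⟩
    obtain ⟨x₁, y₁, x₂, y₂, hv, e1, e2⟩ := hiff.2 ⟨hd₁, hd₂, by linarith⟩
    refine ⟨![⟨x₁, y₁⟩, ⟨x₂, y₂⟩], ?_, ?_, ?_⟩
    · intro h
      apply hv
      have k0 := congrFun h 0
      have k1 := congrFun h 1
      simp [Complex.ext_iff] at k0 k1
      exact ⟨k0.1, k0.2, k1.1, k1.2⟩
    · rw [quad_eq, Complex.ofReal_eq_zero]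
      simpa using e1
    · rw [quad_eq, Complex.ofReal_eq_zero]
      simpa using e2
end

section
/- Let A_1 and A_2 be complex 2×2 matrices with det A_1 = det A_2 = 1 such that F_1(A_1†A_1 − I, A_2†A_2 − I) < 0. For N ∈ ℕ define the time-extended matrices 𝒜_k = I_N ⊗ A_k (the 2N×2N block-diagonal matrix with N copies of A_k on the diagonal), k = 1,2. Then for every N ∈ ℕ there do not exist 2N×2N complex unitary matrices 𝒰_1, 𝒰_2, 𝒱 such that both 𝒰_1† 𝒜_1 𝒱 and 𝒰_2† 𝒜_2 𝒱 are upper-triangular with all diagonal entries equal to 1. -/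
open Matrix ComplexOrder

/-- The time-extended matrix `I_N ⊗ A`: the `2N × 2N` block-diagonal matrix with `N` copies
of the `2 × 2` matrix `A` on the diagonal, reindexed by `Fin (2 * N)`. -/
noncomputable def timeExtend (N : ℕ) (A : Matrix (Fin 2) (Fin 2) ℂ) :
    Matrix (Fin (2 * N)) (Fin (2 * N)) ℂ :=
  Matrix.reindex finProdFinEquiv finProdFinEquiv
    (Matrix.blockDiagonal fun _ : Fin N => A)

set_option maxHeartbeats 1000000

lemma timeExtend_mul (N : ℕ) (A B : Matrix (Fin 2) (Fin 2) ℂ) :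
    timeExtend N A * timeExtend N B = timeExtend N (A * B) := by
  simp only [timeExtend, reindex_apply, Matrix.submatrix_mul_equiv, ← Matrix.blockDiagonal_mul]

lemma timeExtend_conjTranspose (N : ℕ) (A : Matrix (Fin 2) (Fin 2) ℂ) :
    (timeExtend N A)ᴴ = timeExtend N Aᴴ := by
  simp only [timeExtend, reindex_apply, Matrix.conjTranspose_submatrix,
    Matrix.blockDiagonal_conjTranspose]

lemma timeExtend_sub (N : ℕ) (A B : Matrix (Fin 2) (Fin 2) ℂ) :
    timeExtend N (A - B) = timeExtend N A - timeExtend N B := by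
  simp only [timeExtend, reindex_apply]
  rw [show (fun _ : Fin N => A - B) = (fun _ : Fin N => A) - (fun _ : Fin N => B) from rfl,
    Matrix.blockDiagonal_sub]
  rfl

lemma timeExtend_one (N : ℕ) : timeExtend N 1 = 1 := by
  simp only [timeExtend, reindex_apply]
  rw [show (fun _ : Fin N => (1 : Matrix (Fin 2) (Fin 2) ℂ)) = 1 from rfl,
    Matrix.blockDiagonal_one, Matrix.submatrix_one_equiv]

lemma timeExtend_add (N : ℕ) (A B : Matrix (Fin 2) (Fin 2) ℂ) :
    timeExtend N (A + B) = timeExtend N A + timeExtend N B := by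
  simp only [timeExtend, reindex_apply]
  rw [show (fun _ : Fin N => A + B) = (fun _ : Fin N => A) + (fun _ : Fin N => B) from rfl,
    Matrix.blockDiagonal_add]
  rfl

lemma timeExtend_smul (N : ℕ) (c : ℂ) (A : Matrix (Fin 2) (Fin 2) ℂ) :
    timeExtend N (c • A) = c • timeExtend N A := by
  simp only [timeExtend, reindex_apply]
  rw [show (fun _ : Fin N => c • A) = c • (fun _ : Fin N => A) from rfl,
    Matrix.blockDiagonal_smul]
  rfl

lemma timeExtend_form (N : ℕ) (M : Matrix (Fin 2) (Fin 2) ℂ) (v : Fin (2*N) → ℂ) :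
    star v ⬝ᵥ (timeExtend N M) *ᵥ v
      = ∑ k : Fin N, star (fun i : Fin 2 => v (finProdFinEquiv (i, k)))
          ⬝ᵥ M *ᵥ (fun i : Fin 2 => v (finProdFinEquiv (i, k))) := by
  classical
  set e : Fin 2 × Fin N ≃ Fin (2*N) := finProdFinEquiv with he
  have lhs2 : ∀ p q : Fin 2 × Fin N,
      (timeExtend N M) (e p) (e q) = if p.2 = q.2 then M p.1 q.1 else 0 := by
    intro p q
    simp [timeExtend, he, Matrix.submatrix_apply, Matrix.blockDiagonal_apply]
  have lhs1 : star v ⬝ᵥ (timeExtend N M) *ᵥ v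
      = ∑ i : Fin (2*N), ∑ j : Fin (2*N),
          star (v i) * ((timeExtend N M) i j * v j) := by
    simp [dotProduct, mulVec, Finset.mul_sum]
  rw [lhs1,
    ← Equiv.sum_comp e (fun i => ∑ j : Fin (2*N), star (v i) * ((timeExtend N M) i j * v j))]
  have lhs3 : ∀ p : Fin 2 × Fin N,
      (∑ j : Fin (2*N), star (v (e p)) * ((timeExtend N M) (e p) j * v j))
      = ∑ q : Fin 2 × Fin N,
          star (v (e p)) * ((if p.2 = q.2 then M p.1 q.1 else 0) * v (e q)) := by
    intro p
    rw [← Equiv.sum_comp e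
      (fun j => star (v (e p)) * ((timeExtend N M) (e p) j * v j))]
    exact Finset.sum_congr rfl fun q _ => by rw [lhs2]
  rw [Finset.sum_congr rfl fun p _ => lhs3 p]
  simp only [Fintype.sum_prod_type, dotProduct, mulVec, Pi.star_apply, Finset.mul_sum,
    mul_ite, ite_mul, zero_mul, mul_zero, Finset.sum_ite_eq, Finset.mem_univ, if_true]
  rw [Finset.sum_comm]

lemma F1_eval (a₁ d₁ a₂ d₂ b₁ c₁ b₂ c₂ : ℂ) :
    F1 !![a₁, b₁; c₁, d₁] !![a₂, b₂; c₂, d₂]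
      = 4*(a₁*d₁ - b₁*c₁)*(a₂*d₂ - b₂*c₂) - (a₁*d₂ + d₁*a₂ - b₁*c₂ - b₂*c₁)^2 := by
  simp [F1, Matrix.adjugate_fin_two, Matrix.det_fin_two, Matrix.mul_apply, Fin.sum_univ_two,
    Matrix.sub_apply]
  ring

lemma key (t₁ t₂ q : ℝ) (h1 : 0 ≤ t₁) (h2 : 0 ≤ t₂) (hq : 4*(t₁*t₂) < q^2)
    (hne : t₁ ≠ 0 ∨ t₂ ≠ 0) :
    ∃ α β : ℝ, 0 < t₁*α + t₂*β ∧ 0 < q*(α*β) - t₁*α^2 - t₂*β^2 := by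
  have hq0 : q ≠ 0 := by
    rintro rfl; nlinarith [mul_nonneg h1 h2]
  rcases eq_or_lt_of_le h1 with h1' | h1'
  · have h2' : 0 < t₂ := by rcases hne with h | h; · exact absurd h1'.symm h
                            · exact lt_of_le_of_ne h2 (Ne.symm h)
    exact ⟨(t₂+1)/q, 1, by simpa [← h1'] using h2', by
      field_simp [← h1']; subst h1'; apply div_pos <;> nlinarith [mul_self_pos.mpr hq0]⟩
  rcases eq_or_lt_of_le h2 with h2' | h2'
  · exact ⟨1, (t₁+1)/q, by simpa [← h2'] using h1', by
      field_simp [← h2']; subst h2'; apply div_pos <;> nlinarith [mul_self_pos.mpr hq0]⟩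
  by_cases hc : q + 2*t₂ = 0
  · refine ⟨-(2*t₂), -q, ?_, ?_⟩
    · have : q = -(2*t₂) := by linarith
      subst this
      have ht : t₁ < t₂ := by nlinarith
      nlinarith
    · nlinarith
  · rcases lt_or_gt_of_ne hc with hc' | hc'
    · exact ⟨-q, -(2*t₁), by nlinarith, by nlinarith⟩
    · exact ⟨q, 2*t₁, by nlinarith, by nlinarith⟩

lemma herm_form_pos (a d : ℝ) (b : ℂ) (ha : 0 < a) (hdet : Complex.normSq b < a * d)
    (x : Fin 2 → ℂ) (hx : x ≠ 0) :
    0 < star x ⬝ᵥ (!![(a:ℂ), b; (starRingEnd ℂ) b, (d:ℂ)]) *ᵥ x := by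
  have cmul : ∀ z w : ℂ, (starRingEnd ℂ) (z * w) = (starRingEnd ℂ) z * (starRingEnd ℂ) w :=
    fun z w => _root_.map_mul _ z w
  have hform : star x ⬝ᵥ (!![(a:ℂ), b; (starRingEnd ℂ) b, (d:ℂ)]) *ᵥ x
      = ((a * Complex.normSq (x 0) + d * Complex.normSq (x 1)
          + 2 * (b * (starRingEnd ℂ) (x 0) * x 1).re : ℝ) : ℂ) := by
    apply Complex.ext <;>
      simp [dotProduct, mulVec, Fin.sum_univ_two, Complex.mul_re, Complex.mul_im,
        Complex.normSq_apply] <;> ring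
  rw [hform, Complex.zero_lt_real]
  set n0 := Complex.normSq (x 0) with hn0
  set n1 := Complex.normSq (x 1) with hn1
  set u := (b * (starRingEnd ℂ) (x 0) * x 1).re with hu
  have hd : 0 < d := by nlinarith [Complex.normSq_nonneg b]
  have hn0' : 0 ≤ n0 := Complex.normSq_nonneg _
  have hn1' : 0 ≤ n1 := Complex.normSq_nonneg _
  have hnb : 0 ≤ Complex.normSq b := Complex.normSq_nonneg b
  have hsum : 0 < n0 + n1 := by
    rcases Function.ne_iff.mp hx with ⟨i, hi⟩
    fin_cases i
    · have := Complex.normSq_pos.mpr hi; positivity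
    · have := Complex.normSq_pos.mpr hi; positivity
  have hexp : Complex.normSq ((a:ℂ) * x 0 + b * x 1)
      = a^2*n0 + Complex.normSq b * n1 + 2*(a*u) := by
    rw [Complex.normSq_add, Complex.normSq_mul, Complex.normSq_mul, Complex.normSq_ofReal]
    have hre : ((a:ℂ) * x 0 * (starRingEnd ℂ) (b * x 1)).re
        = a * (b * (starRingEnd ℂ) (x 0) * x 1).re := by
      rw [show (a:ℂ) * x 0 * (starRingEnd ℂ) (b * x 1)
          = (a:ℂ) * ((starRingEnd ℂ) (b * (starRingEnd ℂ) (x 0) * x 1)) by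
        rw [cmul, cmul, cmul, Complex.conj_conj]; ring]
      rw [Complex.re_ofReal_mul, Complex.conj_re]
    rw [hre, hn0, hn1, hu]; ring
  have hns : 0 ≤ Complex.normSq ((a:ℂ) * x 0 + b * x 1) := Complex.normSq_nonneg _
  rcases eq_or_lt_of_le hn1' with h1 | h1
  · have hu0 : u = 0 := by
      have habs : u^2 ≤ Complex.normSq (b * (starRingEnd ℂ) (x 0) * x 1) := by
        have h := Complex.abs_re_le_norm (b * (starRingEnd ℂ) (x 0) * x 1)
        rw [← hu] at h
        nlinarith [Complex.sq_norm (b * (starRingEnd ℂ) (x 0) * x 1), sq_abs u,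
          norm_nonneg (b * (starRingEnd ℂ) (x 0) * x 1), abs_nonneg u]
      rw [Complex.normSq_mul, Complex.normSq_mul, Complex.normSq_conj, ← hn0, ← hn1, ← h1] at habs
      nlinarith
    rw [hu0, ← h1]
    nlinarith
  · nlinarith [hexp, hns, mul_pos ha hd]

lemma herm_entries (S : Matrix (Fin 2) (Fin 2) ℂ) (hH : S.IsHermitian) :
    S = !![((S 0 0).re : ℂ), S 0 1; (starRingEnd ℂ) (S 0 1), ((S 1 1).re : ℂ)] := by
  have e00 : S 0 0 = ((S 0 0).re : ℂ) := (hH.coe_re_apply_self 0).symm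
  have e11 : S 1 1 = ((S 1 1).re : ℂ) := (hH.coe_re_apply_self 1).symm
  have e10 : S 1 0 = (starRingEnd ℂ) (S 0 1) := (hH.apply 1 0).symm
  ext i j
  fin_cases i <;> fin_cases j <;> simp [← e00, ← e11, e10]

lemma combo (S₁ S₂ : Matrix (Fin 2) (Fin 2) ℂ)
    (hH₁ : S₁.IsHermitian) (hH₂ : S₂.IsHermitian)
    (hd₁ : (S₁ + 1).det = 1) (hd₂ : (S₂ + 1).det = 1)
    (hp₁ : 0 ≤ (S₁ 0 0).re + 1) (hp₂ : 0 ≤ (S₂ 0 0).re + 1)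
    (hp₁' : 0 ≤ (S₁ 1 1).re + 1) (hp₂' : 0 ≤ (S₂ 1 1).re + 1)
    (hF : F1 S₁ S₂ < 0) :
    ∃ α β : ℝ, ∀ x : Fin 2 → ℂ, x ≠ 0 →
      0 < star x ⬝ᵥ (((α : ℂ) • S₁ + (β : ℂ) • S₂) *ᵥ x) := by
  obtain ⟨a₁, d₁, b₁, hS₁⟩ : ∃ (a d : ℝ) (b : ℂ),
      S₁ = !![(a:ℂ), b; (starRingEnd ℂ) b, (d:ℂ)] := ⟨_, _, _, herm_entries S₁ hH₁⟩
  obtain ⟨a₂, d₂, b₂, hS₂⟩ : ∃ (a d : ℝ) (b : ℂ),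
      S₂ = !![(a:ℂ), b; (starRingEnd ℂ) b, (d:ℂ)] := ⟨_, _, _, herm_entries S₂ hH₂⟩
  subst hS₁ hS₂
  simp only [show ∀ (a d:ℝ) (b:ℂ), (!![(a:ℂ), b; (starRingEnd ℂ) b, (d:ℂ)]) 0 0 = (a:ℂ) from
      fun _ _ _ => rfl,
    show ∀ (a d:ℝ) (b:ℂ), (!![(a:ℂ), b; (starRingEnd ℂ) b, (d:ℂ)]) 1 1 = (d:ℂ) from
      fun _ _ _ => rfl, Complex.ofReal_re] at hp₁ hp₂ hp₁' hp₂'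
  set nb₁ := Complex.normSq b₁ with hnb₁
  set nb₂ := Complex.normSq b₂ with hnb₂
  set rb := (b₁ * (starRingEnd ℂ) b₂).re with hrb
  have c₁ : b₁ * (starRingEnd ℂ) b₁ = (nb₁ : ℂ) := Complex.mul_conj b₁
  have c₂ : b₂ * (starRingEnd ℂ) b₂ = (nb₂ : ℂ) := Complex.mul_conj b₂
  have c₃' : b₁ * (starRingEnd ℂ) b₂ + b₂ * (starRingEnd ℂ) b₁ = 2 * ((rb : ℝ) : ℂ) := by
    have h := Complex.add_conj (b₁ * (starRingEnd ℂ) b₂)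
    rw [_root_.map_mul, Complex.conj_conj, mul_comm ((starRingEnd ℂ) b₁) b₂] at h
    rw [h]; push_cast; ring
  have det₁ : a₁ * d₁ - nb₁ + (a₁ + d₁) = 0 := by
    have h0 : ((a₁ * d₁ - nb₁ + (a₁ + d₁) : ℝ) : ℂ) = 0 := by
      simp [Matrix.det_fin_two, Matrix.add_apply, Matrix.one_apply] at hd₁
      push_cast
      linear_combination hd₁ + c₁
    exact_mod_cast h0
  have det₂ : a₂ * d₂ - nb₂ + (a₂ + d₂) = 0 := by
    have h0 : ((a₂ * d₂ - nb₂ + (a₂ + d₂) : ℝ) : ℂ) = 0 := by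
      simp [Matrix.det_fin_two, Matrix.add_apply, Matrix.one_apply] at hd₂
      push_cast
      linear_combination hd₂ + c₂
    exact_mod_cast h0
  have hF1' : F1 !![(a₁:ℂ), b₁; (starRingEnd ℂ) b₁, (d₁:ℂ)]
        !![(a₂:ℂ), b₂; (starRingEnd ℂ) b₂, (d₂:ℂ)]
      = ((4*((a₁*d₁-nb₁)*(a₂*d₂-nb₂)) - (a₁*d₂+d₁*a₂-2*rb)^2 : ℝ) : ℂ) := by
    rw [F1_eval]
    push_cast
    linear_combination (4*(-((a₁:ℂ)*(d₁:ℂ)) + ((nb₁:ℝ):ℂ)))*c₂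
      + (4*(-((a₂:ℂ)*(d₂:ℂ)) + b₂*(starRingEnd ℂ) b₂))*c₁
      + (2*((a₁:ℂ)*(d₂:ℂ)+(d₁:ℂ)*(a₂:ℂ))
          - (b₁*(starRingEnd ℂ) b₂ + b₂*(starRingEnd ℂ) b₁) - 2*((rb:ℝ):ℂ))*c₃'
  have hEneg : 4*((a₁+d₁)*(a₂+d₂)) - (a₁*d₂+d₁*a₂-2*rb)^2 < 0 := by
    have h0 : 4*((a₁*d₁-nb₁)*(a₂*d₂-nb₂)) - (a₁*d₂+d₁*a₂-2*rb)^2 < 0 := by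
      rw [hF1'] at hF
      exact_mod_cast Complex.real_lt_real.mp (by exact_mod_cast hF)
    nlinarith [det₁, det₂, h0]
  have hnb₁0 : 0 ≤ nb₁ := Complex.normSq_nonneg _
  have hnb₂0 : 0 ≤ nb₂ := Complex.normSq_nonneg _
  have ht₁0 : 0 ≤ a₁ + d₁ := by nlinarith [sq_nonneg (a₁ - d₁)]
  have ht₂0 : 0 ≤ a₂ + d₂ := by nlinarith [sq_nonneg (a₂ - d₂)]
  have hne : a₁ + d₁ ≠ 0 ∨ a₂ + d₂ ≠ 0 := by
    by_contra hcon
    push_neg at hcon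
    obtain ⟨e₁, e₂⟩ := hcon
    have ha₁0 : a₁ = 0 ∧ nb₁ = 0 := by constructor <;> nlinarith [sq_nonneg a₁]
    have ha₂0 : a₂ = 0 ∧ nb₂ = 0 := by constructor <;> nlinarith [sq_nonneg a₂]
    have hb₁0 : b₁ = 0 := Complex.normSq_eq_zero.mp ha₁0.2
    have hrb0 : rb = 0 := by rw [hrb, hb₁0]; simp
    have hd₁0 : d₁ = 0 := by linarith [ha₁0.1]
    have hd₂0 : d₂ = 0 := by linarith [ha₂0.1]
    rw [ha₁0.1, ha₂0.1, hd₁0, hd₂0, hrb0] at hEneg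
    nlinarith [hEneg]
  obtain ⟨α, β, htr, hg⟩ := key (a₁+d₁) (a₂+d₂) (a₁*d₂+d₁*a₂-2*rb) ht₁0 ht₂0
    (by linarith) hne
  refine ⟨α, β, ?_⟩
  have hdetM : Complex.normSq ((α:ℂ)*b₁ + (β:ℂ)*b₂) = α^2*nb₁ + β^2*nb₂ + 2*(α*β*rb) := by
    rw [Complex.normSq_add, Complex.normSq_mul, Complex.normSq_mul,
      Complex.normSq_ofReal, Complex.normSq_ofReal]
    have h5 : ((α:ℂ)*b₁ * (starRingEnd ℂ) ((β:ℂ)*b₂)).re = α*β*rb := by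
      rw [_root_.map_mul, Complex.conj_ofReal,
        show (α:ℂ)*b₁*((β:ℂ)*(starRingEnd ℂ) b₂) = ((α*β : ℝ):ℂ)*(b₁*(starRingEnd ℂ) b₂) by
          push_cast; ring,
        Complex.re_ofReal_mul, hrb]
    rw [h5, hnb₁, hnb₂]; ring
  have hAD : Complex.normSq ((α:ℂ)*b₁ + (β:ℂ)*b₂) < (α*a₁ + β*a₂)*(α*d₁ + β*d₂) := by
    rw [hdetM]
    have heq : (α*a₁ + β*a₂)*(α*d₁ + β*d₂) - (α^2*nb₁ + β^2*nb₂ + 2*(α*β*rb))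
        = (a₁*d₂+d₁*a₂-2*rb)*(α*β) - (a₁+d₁)*α^2 - (a₂+d₂)*β^2 := by
      linear_combination (α^2)*det₁ + (β^2)*det₂
    linarith [hg, heq]
  have hApos : 0 < α*a₁ + β*a₂ := by
    have hADpos : 0 < (α*a₁ + β*a₂)*(α*d₁ + β*d₂) :=
      lt_of_le_of_lt (Complex.normSq_nonneg _) hAD
    nlinarith [hADpos, htr]
  have hM : (α : ℂ) • !![(a₁:ℂ), b₁; (starRingEnd ℂ) b₁, (d₁:ℂ)]
        + (β : ℂ) • !![(a₂:ℂ), b₂; (starRingEnd ℂ) b₂, (d₂:ℂ)]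
      = !![((α*a₁ + β*a₂ : ℝ):ℂ), (α:ℂ)*b₁ + (β:ℂ)*b₂;
           (starRingEnd ℂ) ((α:ℂ)*b₁ + (β:ℂ)*b₂), ((α*d₁ + β*d₂ : ℝ):ℂ)] := by
    ext i j
    fin_cases i <;> fin_cases j <;>
      simp [Matrix.add_apply, Matrix.smul_apply, smul_eq_mul, map_add,
        Complex.conj_ofReal] <;> push_cast <;> ring
  intro x hx
  rw [hM]
  exact herm_form_pos (α*a₁ + β*a₂) (α*d₁ + β*d₂) ((α:ℂ)*b₁ + (β:ℂ)*b₂) hApos hAD x hx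


/-- **Time extensions do not enable a perfect 2-GMD of `2 × 2` matrices.**
If `A₁, A₂` are complex `2 × 2` matrices of unit determinant with
`F₁(A₁ᴴA₁ − I, A₂ᴴA₂ − I) < 0` (i.e. no perfect 2-GMD of `A₁, A₂` exists), then for every
`N ≥ 1` there are no unitary `𝒰₁, 𝒰₂, 𝒱` making both `𝒰₁ᴴ (I_N ⊗ A₁) 𝒱` and
`𝒰₂ᴴ (I_N ⊗ A₂) 𝒱` upper triangular with all diagonal entries equal to `1`. -/
theorem no_time_extended_two_gmd (A₁ A₂ : Matrix (Fin 2) (Fin 2) ℂ)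
    (h₁ : A₁.det = 1) (h₂ : A₂.det = 1)
    (hF : F1 (A₁ᴴ * A₁ - 1) (A₂ᴴ * A₂ - 1) < 0) (N : ℕ) (hN : 0 < N) :
    ¬ ∃ U₁ U₂ V : Matrix (Fin (2 * N)) (Fin (2 * N)) ℂ,
        U₁ ∈ Matrix.unitaryGroup (Fin (2 * N)) ℂ ∧
        U₂ ∈ Matrix.unitaryGroup (Fin (2 * N)) ℂ ∧
        V ∈ Matrix.unitaryGroup (Fin (2 * N)) ℂ ∧
        (U₁ᴴ * timeExtend N A₁ * V).BlockTriangular id ∧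
        (∀ j, (U₁ᴴ * timeExtend N A₁ * V) j j = 1) ∧
        (U₂ᴴ * timeExtend N A₂ * V).BlockTriangular id ∧
        (∀ j, (U₂ᴴ * timeExtend N A₂ * V) j j = 1) := by

  haveI : NeZero (2 * N) := ⟨by omega⟩
  rintro ⟨U₁, U₂, V, hU₁, hU₂, hV, hT₁, hD₁, hT₂, hD₂⟩
  set v : Fin (2 * N) → ℂ := fun i => V i 0 with hv
  -- the congruence identity
  have hcong : ∀ (U X : Matrix (Fin (2*N)) (Fin (2*N)) ℂ),
      U ∈ Matrix.unitaryGroup (Fin (2*N)) ℂ →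
      (Uᴴ * X * V)ᴴ * (Uᴴ * X * V) = Vᴴ * (Xᴴ * X) * V := by
    intro U X hU
    have h1 : U * Uᴴ = 1 := by
      have := (Unitary.mem_iff.mp hU).2
      rwa [Matrix.star_eq_conjTranspose] at this
    have h2 : U * (Uᴴ * (X * V)) = X * V := by rw [← Matrix.mul_assoc, h1, one_mul]
    calc (Uᴴ * X * V)ᴴ * (Uᴴ * X * V)
        = Vᴴ * (Xᴴ * (U * (Uᴴ * (X * V)))) := by
          simp only [conjTranspose_mul, conjTranspose_conjTranspose, Matrix.mul_assoc]
      _ = Vᴴ * (Xᴴ * (X * V)) := by rw [h2]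
      _ = Vᴴ * (Xᴴ * X) * V := by simp only [Matrix.mul_assoc]
  -- (Rᴴ R) 0 0 = 1 for unit-diagonal triangular R
  have hR00 : ∀ R : Matrix (Fin (2*N)) (Fin (2*N)) ℂ, R.BlockTriangular id →
      (∀ j, R j j = 1) → (Rᴴ * R) 0 0 = 1 := by
    intro R hT hD
    rw [Matrix.mul_apply, Finset.sum_eq_single (0 : Fin (2*N))]
    · simp [Matrix.conjTranspose_apply, hD 0]
    · intro i _ hi
      have hipos : (0 : Fin (2*N)) < i := (Fin.pos_iff_ne_zero' i).mpr hi
      have h0 : R i 0 = 0 := hT (by simpa using hipos)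
      simp [Matrix.conjTranspose_apply, h0]
    · intro h; exact absurd (Finset.mem_univ _) h
  -- quadratic form from (0,0) entry
  have hquad : ∀ Y : Matrix (Fin (2*N)) (Fin (2*N)) ℂ,
      (Vᴴ * Y * V) 0 0 = star v ⬝ᵥ Y *ᵥ v := by
    intro Y
    simp only [Matrix.mul_apply, dotProduct, mulVec, Pi.star_apply, Finset.mul_sum,
      Finset.sum_mul, Matrix.conjTranspose_apply, hv, RCLike.star_def]
    rw [Finset.sum_comm]
    exact Finset.sum_congr rfl fun i _ => Finset.sum_congr rfl fun j _ => by ring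
  -- star v ⬝ᵥ v = 1
  have hv1 : star v ⬝ᵥ v = 1 := by
    have hVV : Vᴴ * V = 1 := by
      have := (Unitary.mem_iff.mp hV).1
      rwa [Matrix.star_eq_conjTranspose] at this
    have : (Vᴴ * V) 0 0 = star v ⬝ᵥ v := by
      simp only [Matrix.mul_apply, dotProduct, Pi.star_apply, Matrix.conjTranspose_apply,
        hv, RCLike.star_def]
    rw [← this, hVV, Matrix.one_apply_eq]
  have hvne : v ≠ 0 := by
    intro h0
    rw [h0] at hv1
    simp at hv1
  -- the two Gram relations
  have hgram : ∀ (U A : _) (hU : U ∈ Matrix.unitaryGroup (Fin (2*N)) ℂ),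
      (Uᴴ * timeExtend N A * V).BlockTriangular id →
      (∀ j, (Uᴴ * timeExtend N A * V) j j = 1) →
      star v ⬝ᵥ (timeExtend N (Aᴴ * A)) *ᵥ v = 1 := by
    intro U A hU hT hD
    have e1 : (timeExtend N A)ᴴ * timeExtend N A = timeExtend N (Aᴴ * A) := by
      rw [timeExtend_conjTranspose, timeExtend_mul]
    rw [← e1, ← hquad, ← hcong U (timeExtend N A) hU, hR00 _ hT hD]
  have hg₁ := hgram U₁ A₁ hU₁ hT₁ hD₁
  have hg₂ := hgram U₂ A₂ hU₂ hT₂ hD₂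
  -- zero quadratic forms for S k
  have hS₁form : star v ⬝ᵥ (timeExtend N (A₁ᴴ * A₁ - 1)) *ᵥ v = 0 := by
    rw [timeExtend_sub, timeExtend_one, Matrix.sub_mulVec, dotProduct_sub, hg₁,
      Matrix.one_mulVec, hv1, sub_self]
  have hS₂form : star v ⬝ᵥ (timeExtend N (A₂ᴴ * A₂ - 1)) *ᵥ v = 0 := by
    rw [timeExtend_sub, timeExtend_one, Matrix.sub_mulVec, dotProduct_sub, hg₂,
      Matrix.one_mulVec, hv1, sub_self]
  -- hypotheses of combo
  have hherm : ∀ A : Matrix (Fin 2) (Fin 2) ℂ, (Aᴴ * A - 1).IsHermitian :=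
    fun A => (Matrix.isHermitian_conjTranspose_mul_self A).sub Matrix.isHermitian_one
  have hdet : ∀ A : Matrix (Fin 2) (Fin 2) ℂ, A.det = 1 → ((Aᴴ * A - 1) + 1).det = 1 := by
    intro A hA
    rw [sub_add_cancel, Matrix.det_mul, Matrix.det_conjTranspose, hA]
    simp
  have hdiag : ∀ (A : Matrix (Fin 2) (Fin 2) ℂ) (i : Fin 2),
      0 ≤ ((Aᴴ * A - 1) i i).re + 1 := by
    intro A i
    have : (Aᴴ * A) i i = ((Complex.normSq (A 0 i) + Complex.normSq (A 1 i) : ℝ) : ℂ) := by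
      simp only [Matrix.mul_apply, Matrix.conjTranspose_apply, Fin.sum_univ_two,
        RCLike.star_def]
      push_cast
      rw [mul_comm ((starRingEnd ℂ) (A 0 i)) (A 0 i), mul_comm ((starRingEnd ℂ) (A 1 i)) (A 1 i),
        Complex.mul_conj, Complex.mul_conj]
    rw [Matrix.sub_apply, Matrix.one_apply_eq, Complex.sub_re, this]
    simp only [Complex.ofReal_re, Complex.one_re]
    have := Complex.normSq_nonneg (A 0 i)
    have := Complex.normSq_nonneg (A 1 i)
    linarith
  obtain ⟨α, β, hpos⟩ := combo (A₁ᴴ * A₁ - 1) (A₂ᴴ * A₂ - 1) (hherm A₁) (hherm A₂)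
    (hdet A₁ h₁) (hdet A₂ h₂) (hdiag A₁ 0) (hdiag A₂ 0) (hdiag A₁ 1) (hdiag A₂ 1) hF
  -- the combined matrix
  set Mc : Matrix (Fin 2) (Fin 2) ℂ :=
    (α : ℂ) • (A₁ᴴ * A₁ - 1) + (β : ℂ) • (A₂ᴴ * A₂ - 1) with hMc
  have hzero : star v ⬝ᵥ (timeExtend N Mc) *ᵥ v = 0 := by
    rw [hMc, timeExtend_add, timeExtend_smul, timeExtend_smul, Matrix.add_mulVec,
      Matrix.smul_mulVec, Matrix.smul_mulVec, dotProduct_add,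
      dotProduct_smul, dotProduct_smul, hS₁form, hS₂form]
    simp
  have hposbig : 0 < star v ⬝ᵥ (timeExtend N Mc) *ᵥ v := by
    rw [timeExtend_form]
    obtain ⟨i0, hi0⟩ := Function.ne_iff.mp hvne
    set p := (finProdFinEquiv : Fin 2 × Fin N ≃ Fin (2*N)).symm i0 with hp
    apply Finset.sum_pos' ?_ ⟨p.2, Finset.mem_univ _, ?_⟩
    · intro k _
      by_cases hk : (fun i : Fin 2 => v (finProdFinEquiv (i, k))) = 0
      · rw [hk]; simp
      · exact le_of_lt (hpos _ hk)
    · apply hpos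
      intro hcon
      apply hi0
      have h5 := congrFun hcon p.1
      have h6 : ((p.1, p.2) : Fin 2 × Fin N) = p := rfl
      simp only [Pi.zero_apply] at h5
      rw [h6, hp, Equiv.apply_symm_apply] at h5
      exact h5
  rw [hzero] at hposbig
  exact lt_irrefl 0 hposbig
end

section
/- Let c_1, c_2, c_3, c_4 be real numbers. Then there exist real numbers x_1, x_2, y_1, y_2 satisfying the four equations x_1² + x_2² = c_1, 2(x_1y_1 + x_2y_2) = c_2, 2(x_2y_1 − x_1y_2) = c_3, and y_1² + y_2² = c_4, if and only if c_1 ≥ 0, c_4 ≥ 0, and 4·c_1·c_4 = c_2² + c_3². -/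
/-- Solvability criterion for the quadratic system arising in the 2-GMD existence proof:
there exist reals `x₁, x₂, y₁, y₂` with `x₁² + x₂² = c₁`, `2(x₁y₁ + x₂y₂) = c₂`,
`2(x₂y₁ − x₁y₂) = c₃` and `y₁² + y₂² = c₄` iff `c₁ ≥ 0`, `c₄ ≥ 0` and
`4·c₁·c₄ = c₂² + c₃²`. -/
theorem quadratic_system_solvable (c₁ c₂ c₃ c₄ : ℝ) :
    (∃ x₁ x₂ y₁ y₂ : ℝ,
        x₁ ^ 2 + x₂ ^ 2 = c₁ ∧
        2 * (x₁ * y₁ + x₂ * y₂) = c₂ ∧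
        2 * (x₂ * y₁ - x₁ * y₂) = c₃ ∧
        y₁ ^ 2 + y₂ ^ 2 = c₄) ↔
      (0 ≤ c₁ ∧ 0 ≤ c₄ ∧ 4 * c₁ * c₄ = c₂ ^ 2 + c₃ ^ 2) := by
  constructor
  · rintro ⟨x₁, x₂, y₁, y₂, h1, h2, h3, h4⟩
    refine ⟨by nlinarith [sq_nonneg x₁, sq_nonneg x₂], by nlinarith [sq_nonneg y₁, sq_nonneg y₂], by subst h1 h2 h3 h4; ring⟩
  · rintro ⟨h1, h4, h⟩
    rcases eq_or_lt_of_le h1 with h0 | h0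
    · have hc2 : c₂ = 0 := by nlinarith [sq_nonneg c₂, sq_nonneg c₃]
      have hc3 : c₃ = 0 := by nlinarith [sq_nonneg c₂, sq_nonneg c₃]
      exact ⟨0, 0, Real.sqrt c₄, 0, by simp [← h0], by simp [hc2], by simp [hc3],
        by simp [Real.sq_sqrt h4]⟩
    · have hs : Real.sqrt c₁ > 0 := Real.sqrt_pos.mpr h0
      have hsq : Real.sqrt c₁ ^ 2 = c₁ := Real.sq_sqrt h1
      refine ⟨Real.sqrt c₁, 0, c₂ / (2 * Real.sqrt c₁), -(c₃ / (2 * Real.sqrt c₁)),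
        by simpa using hsq, by field_simp; ring, by field_simp; ring, ?_⟩
      field_simp
      nlinarith [hsq, hs]
end

section
/- Let c_5, c_6, c_7 be real numbers. Then there exist real numbers x_1, x_2, y_1, y_2 satisfying the three equations x_1² + x_2² = c_5, 2(x_2y_1 − x_1y_2) = c_6, and y_1² + y_2² = c_7, if and only if c_5 ≥ 0, c_7 ≥ 0, and 4·c_5·c_7 − c_6² ≥ 0. -/
/-- Solvability criterion for the reduced quadratic system in the 2-GMD existence proof:
there exist reals `x₁, x₂, y₁, y₂` with `x₁² + x₂² = c₅`, `2(x₂y₁ − x₁y₂) = c₆` and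
`y₁² + y₂² = c₇` iff `c₅ ≥ 0`, `c₇ ≥ 0` and `4·c₅·c₇ − c₆² ≥ 0`. -/
theorem reduced_quadratic_system_solvable (c₅ c₆ c₇ : ℝ) :
    (∃ x₁ x₂ y₁ y₂ : ℝ,
        x₁ ^ 2 + x₂ ^ 2 = c₅ ∧
        2 * (x₂ * y₁ - x₁ * y₂) = c₆ ∧
        y₁ ^ 2 + y₂ ^ 2 = c₇) ↔
      (0 ≤ c₅ ∧ 0 ≤ c₇ ∧ 0 ≤ 4 * c₅ * c₇ - c₆ ^ 2) := by
  constructor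
  · rintro ⟨x₁, x₂, y₁, y₂, h1, h2, h3⟩
    refine ⟨by nlinarith [sq_nonneg x₁, sq_nonneg x₂], by nlinarith [sq_nonneg y₁, sq_nonneg y₂], ?_⟩
    have key : 4 * c₅ * c₇ - c₆ ^ 2 = (2 * (x₁ * y₁ + x₂ * y₂)) ^ 2 := by
      rw [← h1, ← h2, ← h3]; ring
    rw [key]; positivity
  · rintro ⟨h5, h7, h⟩
    rcases eq_or_lt_of_le h5 with he | hlt
    · have hc6 : c₆ = 0 := by nlinarith [sq_nonneg c₆]
      exact ⟨0, 0, Real.sqrt c₇, 0, by simp [← he], by simp [hc6],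
        by simp [Real.sq_sqrt h7]⟩
    · set s := Real.sqrt c₅ with hs
      have hspos : 0 < s := Real.sqrt_pos.mpr hlt
      have hs2 : s ^ 2 = c₅ := Real.sq_sqrt h5
      set y₂ := -c₆ / (2 * s) with hy2
      have hy2sq : y₂ ^ 2 = c₆ ^ 2 / (4 * c₅) := by
        rw [hy2, div_pow, neg_pow, mul_pow, hs2]
        norm_num
      have hle : y₂ ^ 2 ≤ c₇ := by
        rw [hy2sq, div_le_iff₀ (by linarith)]
        nlinarith
      refine ⟨s, 0, Real.sqrt (c₇ - y₂ ^ 2), y₂, by simpa using hs2, ?_, ?_⟩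
      · rw [hy2]; field_simp [hspos.ne']; ring
      · rw [Real.sq_sqrt (by linarith)]; ring
end

section
/- Let N ≥ 2 be an integer and let c_1, c_2, c_3, c_4 be real numbers. Then there exist real numbers x_1,…,x_{2N}, y_1,…,y_{2N} satisfying the four equations ∑_{j=1}^{N}(x_{2j−1}² + x_{2j}²) = c_1, 2∑_{j=1}^{N}(x_{2j−1}y_{2j−1} + x_{2j}y_{2j}) = c_2, 2∑_{j=1}^{N}(x_{2j}y_{2j−1} − x_{2j−1}y_{2j}) = c_3, and ∑_{j=1}^{N}(y_{2j−1}² + y_{2j}²) = c_4, if and only if c_1 ≥ 0, c_4 ≥ 0, and 4·c_1·c_4 ≥ c_2² + c_3². -/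
open BigOperators

private lemma sum_pair_aux (f : ℕ → ℝ) (N : ℕ) :
    ∑ n ∈ Finset.range (2 * N), f n
      = ∑ j ∈ Finset.range N, (f (2 * j) + f (2 * j + 1)) := by
  induction N with
  | zero => simp
  | succ n ih =>
    have h : 2 * (n + 1) = 2 * n + 1 + 1 := by ring
    rw [h, Finset.sum_range_succ, Finset.sum_range_succ, ih, Finset.sum_range_succ]
    ring

private lemma sum_two_aux (g : ℕ → ℝ) (N : ℕ) (hN : 2 ≤ N)
    (h : ∀ j, 2 ≤ j → g j = 0) :
    ∑ j ∈ Finset.range N, g j = g 0 + g 1 := by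
  have hsub : Finset.range 2 ⊆ Finset.range N := Finset.range_subset_range.2 hN
  rw [← Finset.sum_subset hsub (fun i _ hi => h i (by simp at hi; omega))]
  simp [Finset.sum_range_succ]

set_option maxHeartbeats 1600000 in
/-- Solvability criterion for the time-extended quadratic system (indices `0`-based: the pair
`(x_{2j-1}, x_{2j})` of the paper is `(x (2*j), x (2*j+1))` here, `j = 0, …, N-1`):
for `N ≥ 2` there exist reals `x_1, …, x_{2N}, y_1, …, y_{2N}` with
`∑_j (x_{2j-1}² + x_{2j}²) = c₁`, `2 ∑_j (x_{2j-1} y_{2j-1} + x_{2j} y_{2j}) = c₂`,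
`2 ∑_j (x_{2j} y_{2j-1} − x_{2j-1} y_{2j}) = c₃` and `∑_j (y_{2j-1}² + y_{2j}²) = c₄`
iff `c₁ ≥ 0`, `c₄ ≥ 0` and `4·c₁·c₄ ≥ c₂² + c₃²`. -/
theorem extended_quadratic_system_solvable (N : ℕ) (hN : 2 ≤ N) (c₁ c₂ c₃ c₄ : ℝ) :
    (∃ x y : ℕ → ℝ,
        (∑ j ∈ Finset.range N, (x (2 * j) ^ 2 + x (2 * j + 1) ^ 2)) = c₁ ∧
        2 * (∑ j ∈ Finset.range N, (x (2 * j) * y (2 * j) + x (2 * j + 1) * y (2 * j + 1)))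
          = c₂ ∧
        2 * (∑ j ∈ Finset.range N, (x (2 * j + 1) * y (2 * j) - x (2 * j) * y (2 * j + 1)))
          = c₃ ∧
        (∑ j ∈ Finset.range N, (y (2 * j) ^ 2 + y (2 * j + 1) ^ 2)) = c₄) ↔
      (0 ≤ c₁ ∧ 0 ≤ c₄ ∧ c₂ ^ 2 + c₃ ^ 2 ≤ 4 * c₁ * c₄) := by
  constructor
  · rintro ⟨x, y, h1, h2, h3, h4⟩
    have hc1 : 0 ≤ c₁ := by rw [← h1]; positivity
    have hc4 : 0 ≤ c₄ := by rw [← h4]; positivity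
    refine ⟨hc1, hc4, ?_⟩
    set A : ℝ := ∑ j ∈ Finset.range N, (x (2 * j) * y (2 * j) + x (2 * j + 1) * y (2 * j + 1))
      with hA
    set B : ℝ := ∑ j ∈ Finset.range N, (x (2 * j + 1) * y (2 * j) - x (2 * j) * y (2 * j + 1))
      with hB
    set W : ℕ → ℝ := fun n =>
      if n % 2 = 0 then A * y n - B * y (n + 1) else A * y n + B * y (n - 1) with hWdef
    have hW0 : ∀ j, W (2 * j) = A * y (2 * j) - B * y (2 * j + 1) := by
      intro j
      have : (2 * j) % 2 = 0 := by omega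
      simp [hWdef, this]
    have hW1 : ∀ j, W (2 * j + 1) = A * y (2 * j + 1) + B * y (2 * j) := by
      intro j
      have : (2 * j + 1) % 2 = 1 := by omega
      simp [hWdef, this]
    have key1 : ∑ n ∈ Finset.range (2 * N), x n * W n = A ^ 2 + B ^ 2 := by
      rw [sum_pair_aux]
      have : ∀ j ∈ Finset.range N,
          x (2 * j) * W (2 * j) + x (2 * j + 1) * W (2 * j + 1)
            = A * (x (2 * j) * y (2 * j) + x (2 * j + 1) * y (2 * j + 1))
              + B * (x (2 * j + 1) * y (2 * j) - x (2 * j) * y (2 * j + 1)) := by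
        intro j _
        rw [hW0, hW1]; ring
      rw [Finset.sum_congr rfl this, Finset.sum_add_distrib, ← Finset.mul_sum, ← Finset.mul_sum,
        ← hA, ← hB]
      ring
    have key2 : ∑ n ∈ Finset.range (2 * N), x n ^ 2 = c₁ := by
      rw [sum_pair_aux]; exact h1
    have key3 : ∑ n ∈ Finset.range (2 * N), W n ^ 2 = (A ^ 2 + B ^ 2) * c₄ := by
      rw [sum_pair_aux]
      have : ∀ j ∈ Finset.range N,
          W (2 * j) ^ 2 + W (2 * j + 1) ^ 2
            = (A ^ 2 + B ^ 2) * (y (2 * j) ^ 2 + y (2 * j + 1) ^ 2) := by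
        intro j _
        rw [hW0, hW1]; ring
      rw [Finset.sum_congr rfl this, ← Finset.mul_sum, h4]
    have cs := Finset.sum_mul_sq_le_sq_mul_sq (Finset.range (2 * N)) x W
    rw [key1, key2, key3] at cs
    have ht : (0:ℝ) ≤ A ^ 2 + B ^ 2 := by positivity
    rcases ht.eq_or_lt with h | h
    · have hA0 : A = 0 := by nlinarith [sq_nonneg A, sq_nonneg B]
      have hB0 : B = 0 := by nlinarith [sq_nonneg A, sq_nonneg B]
      rw [← h2, ← h3, hA0, hB0]
      nlinarith [mul_nonneg hc1 hc4]
    · have hle : A ^ 2 + B ^ 2 ≤ c₁ * c₄ := by nlinarith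
      rw [← h2, ← h3]
      nlinarith
  · rintro ⟨hc1, hc4, hineq⟩
    by_cases hz : c₁ = 0
    · subst hz
      have hc2 : c₂ = 0 := by nlinarith [sq_nonneg c₂, sq_nonneg c₃]
      have hc3 : c₃ = 0 := by nlinarith [sq_nonneg c₂, sq_nonneg c₃]
      refine ⟨fun _ => 0, fun n => if n = 0 then Real.sqrt c₄ else 0, ?_, ?_, ?_, ?_⟩
      · simp
      · simpa using hc2.symm
      · simpa using hc3.symm
      · rw [sum_two_aux _ N hN]
        · have h0 : (0:ℕ) = 0 := rfl
          simp [Real.sq_sqrt hc4]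
        · intro j hj
          have h1 : 2 * j ≠ 0 := by omega
          have h2 : 2 * j + 1 ≠ 0 := by omega
          simp [h1, h2]
    · have hc1pos : 0 < c₁ := lt_of_le_of_ne hc1 (Ne.symm hz)
      set s := Real.sqrt c₁ with hs
      have hs2 : s ^ 2 = c₁ := Real.sq_sqrt hc1
      have hs0 : 0 < s := Real.sqrt_pos.2 hc1pos
      have hrin : 0 ≤ c₄ - (c₂ ^ 2 + c₃ ^ 2) / (4 * c₁) := by
        rw [sub_nonneg, div_le_iff₀ (by linarith : (0:ℝ) < 4 * c₁)]
        linarith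
      set r := Real.sqrt (c₄ - (c₂ ^ 2 + c₃ ^ 2) / (4 * c₁)) with hr
      have hr2 : r ^ 2 = c₄ - (c₂ ^ 2 + c₃ ^ 2) / (4 * c₁) := Real.sq_sqrt hrin
      refine ⟨fun n => if n = 0 then s else 0,
        fun n => if n = 0 then c₂ / (2 * s) else if n = 1 then -c₃ / (2 * s)
          else if n = 2 then r else 0, ?_, ?_, ?_, ?_⟩
      · rw [sum_two_aux _ N hN]
        · simpa using hs2
        · intro j hj
          have h1 : 2 * j ≠ 0 := by omega
          have h2 : 2 * j + 1 ≠ 0 := by omega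
          simp [h1, h2]
      · rw [sum_two_aux _ N hN]
        · norm_num
          field_simp
        · intro j hj
          have h1 : 2 * j ≠ 0 := by omega
          have h2 : 2 * j + 1 ≠ 0 := by omega
          simp [h1, h2]
      · rw [sum_two_aux _ N hN]
        · norm_num
          field_simp
        · intro j hj
          have h1 : 2 * j ≠ 0 := by omega
          have h2 : 2 * j + 1 ≠ 0 := by omega
          simp [h1, h2]
      · rw [sum_two_aux _ N hN]
        · have hsne : s ≠ 0 := ne_of_gt hs0
          norm_num
          rw [hr2]
          field_simp
          nlinarith [hs2]
        · intro j hj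
          have h1 : 2 * j ≠ 0 := by omega
          have h2 : 2 * j ≠ 1 := by omega
          have h3 : 2 * j ≠ 2 := by omega
          have h4 : 2 * j + 1 ≠ 0 := by omega
          have h5 : 2 * j + 1 ≠ 1 := by omega
          have h6 : 2 * j + 1 ≠ 2 := by omega
          simp only [if_neg h1, if_neg h2, if_neg h3, if_neg h4, if_neg h5, if_neg h6]
          norm_num
end

section
/- Let A_1 and A_2 be n×n invertible complex matrices with det A_1 = det A_2. Then there exist n×n unitary matrices U_1, U_2, V and n×n upper-triangular matrices R_1, R_2 with real positive diagonal entries satisfying [R_1]_{jj} = [R_2]_{jj} for all j = 1,…,n, such that A_1 = U_1 R_1 V† and A_2 = U_2 R_2 V†. -/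
open Matrix ComplexOrder

section TwoJetAux

open Polynomial

/-! ### Euclidean norm on plain vectors -/

noncomputable def JET.enorm {m : ℕ} (v : Fin m → ℂ) : ℝ :=
  ‖(WithLp.equiv 2 (Fin m → ℂ)).symm v‖

namespace JET

theorem enorm_smul {m : ℕ} (c : ℂ) (v : Fin m → ℂ) : enorm (c • v) = ‖c‖ * enorm v :=
  norm_smul c ((WithLp.equiv 2 (Fin m → ℂ)).symm v)

theorem enorm_pos {m : ℕ} (v : Fin m → ℂ) (hv : v ≠ 0) : 0 < enorm v := by
  unfold enorm
  rw [norm_pos_iff]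
  exact fun h => hv (congrArg (WithLp.equiv 2 (Fin m → ℂ)) h)

/-! ### Eigenvalues and determinant bounds -/

theorem eig_of_root {m : ℕ} (M : Matrix (Fin m) (Fin m) ℂ) (lam : ℂ)
    (h : M.charpoly.eval lam = 0) :
    ∃ v : Fin m → ℂ, v ≠ 0 ∧ M.mulVec v = lam • v := by
  have hd : (Matrix.scalar (Fin m) lam - M).det = 0 := by
    rw [Matrix.charpoly, eval_det, matPolyEquiv_charmatrix] at h
    simpa using h
  obtain ⟨v, hv, hMv⟩ := (Matrix.exists_mulVec_eq_zero_iff).2 hd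
  refine ⟨v, hv, ?_⟩
  rw [Matrix.sub_mulVec] at hMv
  have h2 : (Matrix.scalar (Fin m) lam).mulVec v = lam • v := by
    ext i; simp [Matrix.mulVec_diagonal, Matrix.scalar]
  rw [h2] at hMv
  exact (sub_eq_zero.mp hMv).symm

theorem multiset_prod_le_one (s : Multiset ℝ) (h : ∀ x ∈ s, 0 ≤ x ∧ x ≤ 1) : s.prod ≤ 1 := by
  induction s using Multiset.induction with
  | empty => simp
  | cons a t ih =>
    rw [Multiset.prod_cons]
    have ha := h a (Multiset.mem_cons_self a t)
    have ht := ih (fun x hx => h x (Multiset.mem_cons_of_mem hx))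
    have htn : 0 ≤ t.prod :=
      Multiset.prod_nonneg (fun x hx => (h x (Multiset.mem_cons_of_mem hx)).1)
    calc a * t.prod ≤ 1 * 1 := mul_le_mul ha.2 ht htn zero_le_one
      _ = 1 := mul_one 1

theorem multiset_prod_lt_one (s : Multiset ℝ) (hs : s ≠ 0) (h : ∀ x ∈ s, 0 ≤ x ∧ x < 1) :
    s.prod < 1 := by
  induction s using Multiset.induction with
  | empty => exact absurd rfl hs
  | cons a t _ =>
    rw [Multiset.prod_cons]
    have ha := h a (Multiset.mem_cons_self a t)
    have ht1 : t.prod ≤ 1 := multiset_prod_le_one t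
      (fun x hx => ⟨(h x (Multiset.mem_cons_of_mem hx)).1,
        le_of_lt (h x (Multiset.mem_cons_of_mem hx)).2⟩)
    calc a * t.prod ≤ a * 1 := mul_le_mul_of_nonneg_left ht1 ha.1
      _ = a := mul_one a
      _ < 1 := ha.2

theorem det_norm_lt_one {m : ℕ} (hm : 0 < m) (M : Matrix (Fin m) (Fin m) ℂ)
    (h : ∀ lam : ℂ, M.charpoly.eval lam = 0 → ‖lam‖ < 1) : ‖M.det‖ < 1 := by
  rw [Matrix.det_eq_prod_roots_charpoly]
  have hcard : M.charpoly.roots.card = m := by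
    have hs : M.charpoly.Splits := IsAlgClosed.splits _
    have := (Polynomial.splits_iff_card_roots (f := M.charpoly)).mp hs
    rwa [Matrix.charpoly_natDegree_eq_dim, Fintype.card_fin] at this
  have hnp : ‖M.charpoly.roots.prod‖ = (M.charpoly.roots.map (fun z => ‖z‖)).prod := by
    simpa using map_multiset_prod (normHom : ℂ →*₀ ℝ) M.charpoly.roots
  rw [hnp]
  apply multiset_prod_lt_one
  · intro h0
    rw [Multiset.map_eq_zero.mp h0] at hcard
    simp at hcard; omega
  · intro x hx
    obtain ⟨z, hz, rfl⟩ := Multiset.mem_map.mp hx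
    exact ⟨norm_nonneg z, h z (Polynomial.isRoot_of_mem_roots hz)⟩

theorem det_lt_of_contraction {m : ℕ} (hm : 0 < m) (M : Matrix (Fin m) (Fin m) ℂ)
    (h : ∀ v : Fin m → ℂ, v ≠ 0 → enorm (M.mulVec v) < enorm v) : ‖M.det‖ < 1 := by
  apply det_norm_lt_one hm
  intro lam hlam
  obtain ⟨v, hv, hMv⟩ := eig_of_root M lam hlam
  have h1 := h v hv
  rw [hMv, enorm_smul] at h1
  have h2 := enorm_pos v hv
  nlinarith

/-! ### Existence of a direction with equal norms -/

theorem exists_ge_vec {m : ℕ} (A₁ A₂ : Matrix (Fin (m+1)) (Fin (m+1)) ℂ)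
    (h₁ : IsUnit A₁.det) (h₂ : IsUnit A₂.det) (hdet : ‖A₁.det‖ = ‖A₂.det‖) :
    ∃ x : EuclideanSpace ℂ (Fin (m+1)), ‖x‖ = 1 ∧
      enorm (A₂.mulVec (WithLp.equiv 2 (Fin (m+1) → ℂ) x)) ≤
      enorm (A₁.mulVec (WithLp.equiv 2 (Fin (m+1) → ℂ) x)) := by
  by_contra hc
  push_neg at hc
  have hcontr : ∀ v : Fin (m+1) → ℂ, v ≠ 0 →
      enorm ((A₁ * A₂⁻¹).mulVec v) < enorm v := by
    intro v hv
    set u := A₂⁻¹.mulVec v with hu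
    have huv : A₂.mulVec u = v := by
      rw [hu, Matrix.mulVec_mulVec, Matrix.mul_nonsing_inv _ h₂, Matrix.one_mulVec]
    have hune : u ≠ 0 := by
      intro h0
      rw [h0, Matrix.mulVec_zero] at huv
      exact hv huv.symm
    have hc0 : 0 < enorm u := enorm_pos u hune
    set x : EuclideanSpace ℂ (Fin (m+1)) :=
      (WithLp.equiv 2 (Fin (m+1) → ℂ)).symm (((enorm u)⁻¹ : ℂ) • u) with hx
    have hxnorm : ‖x‖ = 1 := by
      show enorm (((enorm u)⁻¹ : ℂ) • u) = 1
      rw [enorm_smul]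
      rw [show ‖((enorm u)⁻¹ : ℂ)‖ = (enorm u)⁻¹ by
        rw [norm_inv, Complex.norm_real, Real.norm_eq_abs, abs_of_pos hc0]]
      field_simp
    have hlt := hc x hxnorm
    have hxv : WithLp.equiv 2 (Fin (m+1) → ℂ) x = ((enorm u)⁻¹ : ℂ) • u := rfl
    rw [hxv, Matrix.mulVec_smul, Matrix.mulVec_smul, enorm_smul, enorm_smul] at hlt
    have hnc : ‖((enorm u)⁻¹ : ℂ)‖ = (enorm u)⁻¹ := by
      rw [norm_inv, Complex.norm_real, Real.norm_eq_abs, abs_of_pos hc0]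
    rw [hnc] at hlt
    have hlt2 : enorm (A₁.mulVec u) < enorm (A₂.mulVec u) := by
      have := mul_lt_mul_of_pos_left hlt hc0
      rw [← mul_assoc, ← mul_assoc, mul_inv_cancel₀ (ne_of_gt hc0), one_mul, one_mul] at this
      exact this
    calc enorm ((A₁ * A₂⁻¹).mulVec v) = enorm (A₁.mulVec u) := by
          rw [hu, ← Matrix.mulVec_mulVec]
      _ < enorm (A₂.mulVec u) := hlt2
      _ = enorm v := by rw [huv]
  have hlt := det_lt_of_contraction (Nat.succ_pos m) _ hcontr
  rw [Matrix.det_mul, Matrix.det_nonsing_inv, norm_mul] at hlt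
  have h2ne : ‖A₂.det‖ ≠ 0 := by
    simpa using h₂.ne_zero
  rw [Ring.inverse_eq_inv, norm_inv, hdet, mul_inv_cancel₀ h2ne] at hlt
  exact lt_irrefl 1 hlt

theorem exists_eq_norm_vec {m : ℕ} (A₁ A₂ : Matrix (Fin (m+1)) (Fin (m+1)) ℂ)
    (h₁ : IsUnit A₁.det) (h₂ : IsUnit A₂.det) (hdet : ‖A₁.det‖ = ‖A₂.det‖) :
    ∃ x : Fin (m+1) → ℂ, enorm x = 1 ∧
      enorm (A₁.mulVec x) = enorm (A₂.mulVec x) := by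
  obtain ⟨x₁, hx₁, hge⟩ := exists_ge_vec A₁ A₂ h₁ h₂ hdet
  obtain ⟨x₂, hx₂, hle⟩ := exists_ge_vec A₂ A₁ h₂ h₁ hdet.symm
  set g : EuclideanSpace ℂ (Fin (m+1)) → ℝ := fun z =>
    ‖Matrix.toEuclideanLin A₁ z‖ - ‖Matrix.toEuclideanLin A₂ z‖ with hg
  have hgen : ∀ z : EuclideanSpace ℂ (Fin (m+1)),
      g z = enorm (A₁.mulVec (WithLp.equiv 2 (Fin (m+1) → ℂ) z)) -
            enorm (A₂.mulVec (WithLp.equiv 2 (Fin (m+1) → ℂ) z)) := by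
    intro z
    simp only [hg, Matrix.toEuclideanLin_apply]
    rfl
  have hcont : Continuous g := by
    apply Continuous.sub <;> exact
      (Continuous.norm (LinearMap.continuous_of_finiteDimensional _))
  have hconn : IsPreconnected (Metric.sphere (0 : EuclideanSpace ℂ (Fin (m+1))) 1) := by
    refine (isConnected_sphere ?_ 0 zero_le_one).isPreconnected
    have hfr : 1 < Module.finrank ℝ (EuclideanSpace ℂ (Fin (m+1))) := by
      have hmul := Module.finrank_mul_finrank ℝ ℂ (EuclideanSpace ℂ (Fin (m+1)))
      rw [Complex.finrank_real_complex, finrank_euclideanSpace, Fintype.card_fin] at hmul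
      omega
    rw [← Module.finrank_eq_rank ℝ]
    exact_mod_cast hfr
  have hmem₁ : x₁ ∈ Metric.sphere (0 : EuclideanSpace ℂ (Fin (m+1))) 1 :=
    mem_sphere_zero_iff_norm.mpr hx₁
  have hmem₂ : x₂ ∈ Metric.sphere (0 : EuclideanSpace ℂ (Fin (m+1))) 1 :=
    mem_sphere_zero_iff_norm.mpr hx₂
  have hsub := hconn.intermediate_value hmem₂ hmem₁ hcont.continuousOn
  have h0mem : (0:ℝ) ∈ Set.Icc (g x₂) (g x₁) := by
    constructor
    · rw [hgen x₂]; linarith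
    · rw [hgen x₁]; linarith
  obtain ⟨z, hzS, hz0⟩ := hsub h0mem
  refine ⟨WithLp.equiv 2 (Fin (m+1) → ℂ) z, ?_, ?_⟩
  · show enorm _ = 1
    have : ‖z‖ = 1 := mem_sphere_zero_iff_norm.mp hzS
    simpa [enorm] using this
  · have := hgen z
    rw [hz0] at this
    linarith [this.symm, sub_eq_zero.mp this.symm]

/-! ### Unitary matrix with prescribed first column -/

theorem exists_unitary_col {m : ℕ} (y : Fin (m+1) → ℂ) (hy : enorm y = 1) :
    ∃ W : Matrix (Fin (m+1)) (Fin (m+1)) ℂ,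
      W ∈ Matrix.unitaryGroup (Fin (m+1)) ℂ ∧ ∀ j, W j 0 = y j := by
  set y' : EuclideanSpace ℂ (Fin (m+1)) := (WithLp.equiv 2 (Fin (m+1) → ℂ)).symm y with hy'
  have hunit : ‖y'‖ = 1 := hy
  have horth : Orthonormal ℂ (({0} : Set (Fin (m+1))).restrict (fun _ : Fin (m+1) => y')) := by
    rw [orthonormal_iff_ite]
    intro i j
    have hij : i = j := Subtype.ext (by
      have hi := i.2; have hj := j.2
      simp only [Set.mem_singleton_iff] at hi hj
      rw [hi, hj])
    subst hij
    simp only [if_pos rfl, Set.restrict_apply, if_true]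
    have h2 := inner_self_eq_norm_sq_to_K (𝕜 := ℂ) (E := EuclideanSpace ℂ (Fin (m+1))) y'
    show inner ℂ y' y' = (1:ℂ)
    rw [h2, hunit]
    norm_num
  obtain ⟨b, hb⟩ := horth.exists_orthonormalBasis_extension_of_card_eq
    (by simp [finrank_euclideanSpace])
  refine ⟨Matrix.of fun j k => b k j, ?_, fun j => by
    simp only [Matrix.of_apply]
    rw [hb 0 rfl]
    rfl⟩
  rw [Matrix.mem_unitaryGroup_iff']
  ext k l
  rw [Matrix.mul_apply, Matrix.one_apply]
  have := orthonormal_iff_ite.mp b.orthonormal k l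
  rw [PiLp.inner_apply] at this
  simp only [RCLike.inner_apply] at this
  simpa [Matrix.star_apply, mul_comm] using this

/-! ### Lifting matrices by a 1×1 identity block -/

def lift1 {m : ℕ} (M : Matrix (Fin m) (Fin m) ℂ) : Matrix (Fin (m+1)) (Fin (m+1)) ℂ :=
  Matrix.of fun i j =>
    Fin.cases (Fin.cases 1 (fun _ => 0) j) (fun i' => Fin.cases 0 (fun j' => M i' j') j) i

@[simp] lemma lift1_zz {m : ℕ} (M : Matrix (Fin m) (Fin m) ℂ) : lift1 M 0 0 = 1 := rfl
@[simp] lemma lift1_sz {m : ℕ} (M : Matrix (Fin m) (Fin m) ℂ) (i : Fin m) :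
    lift1 M i.succ 0 = 0 := rfl
@[simp] lemma lift1_zs {m : ℕ} (M : Matrix (Fin m) (Fin m) ℂ) (j : Fin m) :
    lift1 M 0 j.succ = 0 := rfl
@[simp] lemma lift1_ss {m : ℕ} (M : Matrix (Fin m) (Fin m) ℂ) (i j : Fin m) :
    lift1 M i.succ j.succ = M i j := rfl

lemma lift1_mul {m : ℕ} (M N : Matrix (Fin m) (Fin m) ℂ) :
    lift1 M * lift1 N = lift1 (M * N) := by
  ext i j
  rw [Matrix.mul_apply]
  induction i using Fin.cases with
  | zero =>
    induction j using Fin.cases with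
    | zero => simp [Fin.sum_univ_succ]
    | succ j' => simp [Fin.sum_univ_succ]
  | succ i' =>
    induction j using Fin.cases with
    | zero => simp [Fin.sum_univ_succ]
    | succ j' => simp [Fin.sum_univ_succ, Matrix.mul_apply]

lemma lift1_conjTranspose {m : ℕ} (M : Matrix (Fin m) (Fin m) ℂ) :
    (lift1 M)ᴴ = lift1 Mᴴ := by
  ext i j
  induction i using Fin.cases with
  | zero =>
    induction j using Fin.cases with
    | zero => simp [conjTranspose_apply]
    | succ j' => simp [conjTranspose_apply]
  | succ i' =>
    induction j using Fin.cases with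
    | zero => simp [conjTranspose_apply]
    | succ j' => simp [conjTranspose_apply]

lemma lift1_one {m : ℕ} : lift1 (1 : Matrix (Fin m) (Fin m) ℂ) = 1 := by
  ext i j
  induction i using Fin.cases with
  | zero =>
    induction j using Fin.cases with
    | zero => simp
    | succ j' => simp [Matrix.one_apply, (Fin.succ_ne_zero j').symm]
  | succ i' =>
    induction j using Fin.cases with
    | zero => simp [Matrix.one_apply, Fin.succ_ne_zero i']
    | succ j' => simp [Matrix.one_apply, Fin.succ_inj]

lemma lift1_unitary {m : ℕ} {M : Matrix (Fin m) (Fin m) ℂ}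
    (h : M ∈ Matrix.unitaryGroup (Fin m) ℂ) : lift1 M ∈ Matrix.unitaryGroup (Fin (m+1)) ℂ := by
  rw [Matrix.mem_unitaryGroup_iff] at h ⊢
  rw [show (star (lift1 M) : Matrix _ _ ℂ) = (lift1 M)ᴴ from rfl, lift1_conjTranspose,
    lift1_mul, show (Mᴴ : Matrix _ _ ℂ) = star M from rfl, h, lift1_one]

/-! ### Sandwich entry computations -/

section sandwich
variable {m : ℕ} (P Q : Matrix (Fin m) (Fin m) ℂ) (T : Matrix (Fin (m+1)) (Fin (m+1)) ℂ)

lemma sand_zz : (lift1 P * T * lift1 Q) 0 0 = T 0 0 := by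
  rw [Matrix.mul_apply]
  simp only [Fin.sum_univ_succ, lift1_sz, lift1_zz, mul_zero, add_zero, mul_one,
    Finset.sum_const_zero, zero_mul]
  rw [Matrix.mul_apply]
  simp [Fin.sum_univ_succ]

lemma sand_sz {r : ℝ} (hT : ∀ k, T k 0 = if k = 0 then (r:ℂ) else 0) (i : Fin m) :
    (lift1 P * T * lift1 Q) i.succ 0 = 0 := by
  rw [Matrix.mul_apply]
  simp only [Fin.sum_univ_succ, lift1_sz, lift1_zz, lift1_zs, mul_zero, zero_mul,
    Finset.sum_const_zero, add_zero, mul_one]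
  rw [Matrix.mul_apply]
  simp [Fin.sum_univ_succ, hT, Fin.succ_ne_zero]

lemma sand_ss (i j : Fin m) :
    (lift1 P * T * lift1 Q) i.succ j.succ
      = (P * T.submatrix Fin.succ Fin.succ * Q) i j := by
  rw [Matrix.mul_apply, Matrix.mul_apply]
  simp only [Fin.sum_univ_succ, lift1_zs, lift1_ss, mul_zero, zero_mul,
    Finset.sum_const_zero, add_zero, zero_add]
  refine Finset.sum_congr rfl fun k _ => ?_
  congr 1
  rw [Matrix.mul_apply, Matrix.mul_apply]
  simp [Fin.sum_univ_succ]
end sandwich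

/-! ### Misc helpers -/

lemma cancel_left {m : ℕ} {M N : Matrix (Fin m) (Fin m) ℂ} (h : M * N = 1)
    (Z : Matrix (Fin m) (Fin m) ℂ) : M * (N * Z) = Z := by
  rw [← Matrix.mul_assoc, h, Matrix.one_mul]

lemma star_mem_ug {m : ℕ} {U : Matrix (Fin m) (Fin m) ℂ}
    (hU : U ∈ Matrix.unitaryGroup (Fin m) ℂ) : Uᴴ ∈ Matrix.unitaryGroup (Fin m) ℂ := by
  simpa [Matrix.star_eq_conjTranspose] using Unitary.star_mem hU

lemma unitary_det_norm {m : ℕ} {U : Matrix (Fin m) (Fin m) ℂ}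
    (hU : U ∈ Matrix.unitaryGroup (Fin m) ℂ) : ‖U.det‖ = 1 :=
  CStarRing.norm_of_mem_unitary (Matrix.det_of_mem_unitary hU)

lemma det_ne_zero_ug {m : ℕ} {U : Matrix (Fin m) (Fin m) ℂ}
    (hU : U ∈ Matrix.unitaryGroup (Fin m) ℂ) : U.det ≠ 0 := by
  intro h0
  have := unitary_det_norm hU
  rw [h0] at this
  simp at this

lemma conj_sandwich_eq {m : ℕ} {U V R : Matrix (Fin m) (Fin m) ℂ}
    (hU : U ∈ Matrix.unitaryGroup (Fin m) ℂ) (hV : V ∈ Matrix.unitaryGroup (Fin m) ℂ) :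
    Uᴴ * (U * R * Vᴴ) * V = R := by
  have h1 : Uᴴ * U = 1 := Matrix.mem_unitaryGroup_iff'.mp hU
  have h2 : Vᴴ * V = 1 := Matrix.mem_unitaryGroup_iff'.mp hV
  have h3 : U * R * Vᴴ * V = U * R := by
    rw [Matrix.mul_assoc (U * R) Vᴴ V, h2, Matrix.mul_one]
  calc Uᴴ * (U * R * Vᴴ) * V = Uᴴ * (U * R * Vᴴ * V) := by rw [Matrix.mul_assoc]
    _ = Uᴴ * (U * R) := by rw [h3]
    _ = (Uᴴ * U) * R := by rw [Matrix.mul_assoc]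
    _ = R := by rw [h1, Matrix.one_mul]

lemma assemble_eq {m : ℕ} {W X P Q A : Matrix (Fin m) (Fin m) ℂ}
    (hW : W ∈ Matrix.unitaryGroup (Fin m) ℂ) (hX : X ∈ Matrix.unitaryGroup (Fin m) ℂ)
    (hP : P ∈ Matrix.unitaryGroup (Fin m) ℂ) (hQ : Q ∈ Matrix.unitaryGroup (Fin m) ℂ) :
    (W * P) * (Pᴴ * (Wᴴ * A * X) * Q) * (X * Q)ᴴ = A := by
  have hW' : W * Wᴴ = 1 := Matrix.mem_unitaryGroup_iff.mp hW
  have hX' : X * Xᴴ = 1 := Matrix.mem_unitaryGroup_iff.mp hX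
  have hP' : P * Pᴴ = 1 := Matrix.mem_unitaryGroup_iff.mp hP
  have hQ' : Q * Qᴴ = 1 := Matrix.mem_unitaryGroup_iff.mp hQ
  rw [Matrix.conjTranspose_mul]
  simp only [Matrix.mul_assoc]
  rw [cancel_left hQ' Xᴴ, hX', Matrix.mul_one, cancel_left hP' (Wᴴ * A), cancel_left hW' A]


lemma col_lemma {m : ℕ} {A W X : Matrix (Fin (m+1)) (Fin (m+1)) ℂ}
    (hW : W ∈ Matrix.unitaryGroup (Fin (m+1)) ℂ) {r : ℝ}
    (hA : ∀ j, (A.mulVec (fun l => X l 0)) j = (r:ℂ) * W j 0) :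
    ∀ k, (Wᴴ * A * X) k 0 = if k = 0 then (r:ℂ) else 0 := by
  intro k
  have hWW : Wᴴ * W = 1 := Matrix.mem_unitaryGroup_iff'.mp hW
  have key : (Wᴴ * A * X) k 0 = (r:ℂ) * (Wᴴ * W) k 0 := by
    rw [Matrix.mul_assoc, Matrix.mul_apply, Matrix.mul_apply (M := Wᴴ) (N := W),
      Finset.mul_sum]
    refine Finset.sum_congr rfl fun j _ => ?_
    have hAX : (A * X) j 0 = (r:ℂ) * W j 0 := by
      rw [Matrix.mul_apply]
      exact hA j
    rw [hAX]
    ring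
  rw [key, hWW, Matrix.one_apply]
  split <;> simp

lemma det_col {m : ℕ} (T : Matrix (Fin (m+1)) (Fin (m+1)) ℂ) {r : ℝ}
    (hT : ∀ k, T k 0 = if k = 0 then (r:ℂ) else 0) :
    T.det = (r:ℂ) * (T.submatrix Fin.succ Fin.succ).det := by
  rw [Matrix.det_succ_column_zero, Fin.sum_univ_succ]
  have h0 : ∀ i : Fin m, T i.succ 0 = 0 := fun i => by rw [hT]; simp [Fin.succ_ne_zero]
  simp [h0, hT 0, Fin.succAbove_zero]

theorem jet_aux (m : ℕ) : ∀ (A₁ A₂ : Matrix (Fin m) (Fin m) ℂ),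
    IsUnit A₁.det → IsUnit A₂.det → ‖A₁.det‖ = ‖A₂.det‖ →
    ∃ U₁ U₂ V R₁ R₂ : Matrix (Fin m) (Fin m) ℂ,
      U₁ ∈ Matrix.unitaryGroup (Fin m) ℂ ∧ U₂ ∈ Matrix.unitaryGroup (Fin m) ℂ ∧
      V ∈ Matrix.unitaryGroup (Fin m) ℂ ∧
      R₁.BlockTriangular id ∧ R₂.BlockTriangular id ∧
      (∀ j, 0 < R₁ j j) ∧ (∀ j, 0 < R₂ j j) ∧
      (∀ j, R₁ j j = R₂ j j) ∧
      A₁ = U₁ * R₁ * Vᴴ ∧ A₂ = U₂ * R₂ * Vᴴ := by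
  induction m with
  | zero =>
    intro A₁ A₂ _ _ _
    refine ⟨1, 1, 1, 1, 1, one_mem _, one_mem _, one_mem _,
      Matrix.blockTriangular_one, Matrix.blockTriangular_one,
      fun j => j.elim0, fun j => j.elim0, fun j => j.elim0, ?_, ?_⟩ <;>
      · apply Subsingleton.elim
  | succ m ih =>
    intro A₁ A₂ h₁ h₂ hdet
    obtain ⟨x, hx1, hxeq⟩ := exists_eq_norm_vec A₁ A₂ h₁ h₂ hdet
    set r : ℝ := enorm (A₁.mulVec x) with hr_def
    have hxne : x ≠ 0 := by
      intro h
      rw [h] at hx1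
      simp only [enorm, map_zero, norm_zero] at hx1
      exact absurd hx1 (by norm_num)
    have hA1x : A₁.mulVec x ≠ 0 := by
      intro h0
      have : A₁⁻¹.mulVec (A₁.mulVec x) = x := by
        rw [Matrix.mulVec_mulVec, Matrix.nonsing_inv_mul _ h₁, Matrix.one_mulVec]
      rw [h0, Matrix.mulVec_zero] at this
      exact hxne this.symm
    have hA2x : A₂.mulVec x ≠ 0 := by
      intro h0
      have : A₂⁻¹.mulVec (A₂.mulVec x) = x := by
        rw [Matrix.mulVec_mulVec, Matrix.nonsing_inv_mul _ h₂, Matrix.one_mulVec]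
      rw [h0, Matrix.mulVec_zero] at this
      exact hxne this.symm
    have hr : 0 < r := enorm_pos _ hA1x
    have hrC : (r : ℂ) ≠ 0 := by exact_mod_cast ne_of_gt hr
    -- normalized images
    set y₁ : Fin (m+1) → ℂ := ((r⁻¹ : ℝ) : ℂ) • (A₁.mulVec x) with hy₁def
    set y₂ : Fin (m+1) → ℂ := ((r⁻¹ : ℝ) : ℂ) • (A₂.mulVec x) with hy₂def
    have hny : ‖((r⁻¹ : ℝ) : ℂ)‖ = r⁻¹ := by
      rw [Complex.norm_real, Real.norm_eq_abs, abs_of_pos (by positivity)]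
    have hy₁ : enorm y₁ = 1 := by
      rw [hy₁def, enorm_smul, hny, ← hr_def, inv_mul_cancel₀ (ne_of_gt hr)]
    have hy₂ : enorm y₂ = 1 := by
      rw [hy₂def, enorm_smul, hny, ← hxeq, inv_mul_cancel₀ (ne_of_gt hr)]
    obtain ⟨W₁, hW₁u, hW₁c⟩ := exists_unitary_col y₁ hy₁
    obtain ⟨W₂, hW₂u, hW₂c⟩ := exists_unitary_col y₂ hy₂
    obtain ⟨X, hXu, hXc⟩ := exists_unitary_col x hx1
    set T₁ : Matrix (Fin (m+1)) (Fin (m+1)) ℂ := W₁ᴴ * A₁ * X with hT₁def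
    set T₂ : Matrix (Fin (m+1)) (Fin (m+1)) ℂ := W₂ᴴ * A₂ * X with hT₂def
    have hT₁col : ∀ k, T₁ k 0 = if k = 0 then (r:ℂ) else 0 := by
      apply col_lemma hW₁u
      intro j
      have hxcol : (fun l => X l 0) = x := funext hXc
      rw [hxcol, hW₁c j, hy₁def]
      simp only [Pi.smul_apply, smul_eq_mul]
      rw [← mul_assoc]
      rw [show (r:ℂ) * ((r⁻¹ : ℝ) : ℂ) = 1 by
        push_cast
        field_simp]
      rw [one_mul]
    have hT₂col : ∀ k, T₂ k 0 = if k = 0 then (r:ℂ) else 0 := by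
      apply col_lemma hW₂u
      intro j
      have hxcol : (fun l => X l 0) = x := funext hXc
      rw [hxcol, hW₂c j, hy₂def]
      simp only [Pi.smul_apply, smul_eq_mul]
      rw [← mul_assoc]
      rw [show (r:ℂ) * ((r⁻¹ : ℝ) : ℂ) = 1 by
        push_cast
        field_simp]
      rw [one_mul]
    set A₁' := T₁.submatrix Fin.succ Fin.succ with hA₁'def
    set A₂' := T₂.submatrix Fin.succ Fin.succ with hA₂'def
    have hdet₁ : T₁.det = (r:ℂ) * A₁'.det := det_col T₁ hT₁col
    have hdet₂ : T₂.det = (r:ℂ) * A₂'.det := det_col T₂ hT₂col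
    have hnormT₁ : ‖T₁.det‖ = ‖A₁.det‖ := by
      rw [hT₁def, Matrix.det_mul, Matrix.det_mul, norm_mul, norm_mul,
        unitary_det_norm (star_mem_ug hW₁u), unitary_det_norm hXu, one_mul, mul_one]
    have hnormT₂ : ‖T₂.det‖ = ‖A₂.det‖ := by
      rw [hT₂def, Matrix.det_mul, Matrix.det_mul, norm_mul, norm_mul,
        unitary_det_norm (star_mem_ug hW₂u), unitary_det_norm hXu, one_mul, mul_one]
    have hT₁ne : T₁.det ≠ 0 := by
      rw [hT₁def, Matrix.det_mul, Matrix.det_mul]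
      exact mul_ne_zero (mul_ne_zero (det_ne_zero_ug (star_mem_ug hW₁u)) h₁.ne_zero)
        (det_ne_zero_ug hXu)
    have hT₂ne : T₂.det ≠ 0 := by
      rw [hT₂def, Matrix.det_mul, Matrix.det_mul]
      exact mul_ne_zero (mul_ne_zero (det_ne_zero_ug (star_mem_ug hW₂u)) h₂.ne_zero)
        (det_ne_zero_ug hXu)
    have h₁' : IsUnit A₁'.det := by
      rw [isUnit_iff_ne_zero]
      intro h0
      rw [hdet₁, h0, mul_zero] at hT₁ne
      exact hT₁ne rfl
    have h₂' : IsUnit A₂'.det := by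
      rw [isUnit_iff_ne_zero]
      intro h0
      rw [hdet₂, h0, mul_zero] at hT₂ne
      exact hT₂ne rfl
    have hdet' : ‖A₁'.det‖ = ‖A₂'.det‖ := by
      have e1 : r * ‖A₁'.det‖ = ‖A₁.det‖ := by
        rw [← hnormT₁, hdet₁, norm_mul, Complex.norm_real, Real.norm_eq_abs, abs_of_pos hr]
      have e2 : r * ‖A₂'.det‖ = ‖A₂.det‖ := by
        rw [← hnormT₂, hdet₂, norm_mul, Complex.norm_real, Real.norm_eq_abs, abs_of_pos hr]
      have := e1.trans (hdet.trans e2.symm)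
      exact mul_left_cancel₀ (ne_of_gt hr) this
    obtain ⟨U₁', U₂', V', R₁', R₂', hU₁'u, hU₂'u, hV'u, htri₁, htri₂, hpos₁, hpos₂,
      hdiag, heq₁, heq₂⟩ := ih A₁' A₂' h₁' h₂' hdet'
    -- final matrices
    refine ⟨W₁ * lift1 U₁', W₂ * lift1 U₂', X * lift1 V',
      (lift1 U₁')ᴴ * T₁ * lift1 V', (lift1 U₂')ᴴ * T₂ * lift1 V',
      mul_mem hW₁u (lift1_unitary hU₁'u), mul_mem hW₂u (lift1_unitary hU₂'u),
      mul_mem hXu (lift1_unitary hV'u), ?_, ?_, ?_, ?_, ?_, ?_, ?_⟩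
    · -- BlockTriangular R₁
      intro i j hij
      rw [lift1_conjTranspose]
      induction i using Fin.cases with
      | zero => exact absurd hij (by simp)
      | succ i' =>
        induction j using Fin.cases with
        | zero => exact sand_sz _ _ _ hT₁col i'
        | succ j' =>
          rw [sand_ss]
          have : (U₁'ᴴ * A₁' * V') = R₁' := by
            rw [heq₁]; exact conj_sandwich_eq hU₁'u hV'u
          rw [← hA₁'def, this]
          exact htri₁ (by simpa [Fin.succ_lt_succ_iff] using hij)
    · -- BlockTriangular R₂
      intro i j hij
      rw [lift1_conjTranspose]
      induction i using Fin.cases with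
      | zero => exact absurd hij (by simp)
      | succ i' =>
        induction j using Fin.cases with
        | zero => exact sand_sz _ _ _ hT₂col i'
        | succ j' =>
          rw [sand_ss]
          have : (U₂'ᴴ * A₂' * V') = R₂' := by
            rw [heq₂]; exact conj_sandwich_eq hU₂'u hV'u
          rw [← hA₂'def, this]
          exact htri₂ (by simpa [Fin.succ_lt_succ_iff] using hij)
    · -- positivity R₁
      intro j
      rw [lift1_conjTranspose]
      induction j using Fin.cases with
      | zero =>
        rw [sand_zz, hT₁col 0, if_pos rfl]
        exact_mod_cast hr
      | succ j' =>
        rw [sand_ss]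
        have : (U₁'ᴴ * A₁' * V') = R₁' := by
          rw [heq₁]; exact conj_sandwich_eq hU₁'u hV'u
        rw [← hA₁'def, this]
        exact hpos₁ j'
    · -- positivity R₂
      intro j
      rw [lift1_conjTranspose]
      induction j using Fin.cases with
      | zero =>
        rw [sand_zz, hT₂col 0, if_pos rfl]
        exact_mod_cast hr
      | succ j' =>
        rw [sand_ss]
        have : (U₂'ᴴ * A₂' * V') = R₂' := by
          rw [heq₂]; exact conj_sandwich_eq hU₂'u hV'u
        rw [← hA₂'def, this]
        exact hpos₂ j'
    · -- equal diagonals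
      intro j
      rw [lift1_conjTranspose, lift1_conjTranspose]
      induction j using Fin.cases with
      | zero =>
        rw [sand_zz, sand_zz, hT₁col 0, hT₂col 0]
      | succ j' =>
        rw [sand_ss, sand_ss]
        have e1 : (U₁'ᴴ * A₁' * V') = R₁' := by
          rw [heq₁]; exact conj_sandwich_eq hU₁'u hV'u
        have e2 : (U₂'ᴴ * A₂' * V') = R₂' := by
          rw [heq₂]; exact conj_sandwich_eq hU₂'u hV'u
        rw [← hA₁'def, ← hA₂'def, e1, e2]
        exact hdiag j'
    · -- A₁ factorization
      rw [hT₁def]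
      exact (assemble_eq hW₁u hXu (lift1_unitary hU₁'u) (lift1_unitary hV'u)).symm
    · -- A₂ factorization
      rw [hT₂def]
      exact (assemble_eq hW₂u hXu (lift1_unitary hU₂'u) (lift1_unitary hV'u)).symm

end JET
end TwoJetAux

/-- **Existence of a 2-JET (joint equi-diagonal triangularization).**
Any two invertible `n × n` complex matrices `A₁, A₂` with equal determinants can be jointly
triangularized with a common right unitary matrix: there exist unitary `U₁, U₂, V` and upper
triangular `R₁, R₂` with real positive diagonal entries satisfying `[R₁]ⱼⱼ = [R₂]ⱼⱼ` for all
`j`, such that `A₁ = U₁ * R₁ * Vᴴ` and `A₂ = U₂ * R₂ * Vᴴ`. -/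
theorem two_jet_exists {n : ℕ} (A₁ A₂ : Matrix (Fin n) (Fin n) ℂ)
    (h₁ : IsUnit A₁.det) (h₂ : IsUnit A₂.det) (hdet : A₁.det = A₂.det) :
    ∃ U₁ U₂ V R₁ R₂ : Matrix (Fin n) (Fin n) ℂ,
      U₁ ∈ Matrix.unitaryGroup (Fin n) ℂ ∧ U₂ ∈ Matrix.unitaryGroup (Fin n) ℂ ∧
      V ∈ Matrix.unitaryGroup (Fin n) ℂ ∧
      R₁.BlockTriangular id ∧ R₂.BlockTriangular id ∧
      (∀ j, 0 < R₁ j j) ∧ (∀ j, 0 < R₂ j j) ∧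
      (∀ j, R₁ j j = R₂ j j) ∧
      A₁ = U₁ * R₁ * Vᴴ ∧ A₂ = U₂ * R₂ * Vᴴ := by
  exact JET.jet_aux n A₁ A₂ h₁ h₂ (congrArg norm hdet)
end
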